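/- arXiv:1911.11086 — 7 statements merged into one kernel-verified Lean document; each statement's English description precedes it below -/
import Mathlib

section
/- In any epistemic BDT model, ex interim knowledge implies ex post knowledge: if K_α[α]Xφ holds at a situation ⟨m,h⟩, then X K_α Y [Ags]Xφ holds at ⟨m,h⟩. -/
/-- An epistemic branching discrete-time (BDT) structure, presented via its
moments, histories, the membership relation `mem m h` (moment `m` lies on
history `h`), next/prev moment functions along histories, choice partitions
(given as equivalence relations on the histories through each moment),
and epistemic indistinguishability relations on situations. -/
structure BDT where
  Moment : Type
  Hist : Type
  Agent : Type
  mem : Moment → Hist → Prop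
  next : Moment → Hist → Moment
  prev : Moment → Hist → Moment
  next_mem : ∀ m h, mem m h → mem (next m h) h
  prev_mem : ∀ m h, mem m h → mem (prev m h) h
  prev_next : ∀ m h, mem m h → prev (next m h) h = m
  next_prev : ∀ m h, mem m h → next (prev m h) h = m
  choice : Agent → Moment → Hist → Hist → Prop
  choice_sub : ∀ a m h h', mem m h → choice a m h h' → mem m h'
  choice_refl : ∀ a m h, mem m h → choice a m h h
  choice_symm : ∀ a m h h', choice a m h h' → choice a m h' h
  choice_trans : ∀ a m h h' h'', choice a m h h' → choice a m h' h'' → choice a m h h''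
  /-- no choice between undivided histories -/
  no_choice_undivided : ∀ a m h h', mem m h → mem m h' → next m h = next m h' →
    mem (next m h) h' → choice a m h h'
  /-- independence of agency: every selection of choices has nonempty intersection -/
  indep : ∀ m (s : Agent → Hist), (∀ a, mem m (s a)) →
    ∃ h, mem m h ∧ ∀ a, choice a m (s a) h
  indist : Agent → Moment × Hist → Moment × Hist → Prop
  indist_refl : ∀ a s, indist a s s
  indist_symm : ∀ a s t, indist a s t → indist a t s
  indist_trans : ∀ a s t u, indist a s t → indist a t u → indist a s u
  /-- no forget -/
  no_forget : ∀ a m h m' h', mem m h → indist a (next m h, h) (m', h') →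
    indist a (m, h) (prev m' h', h')

namespace BDT

variable (B : BDT)

/-- historical necessity □ -/
def boxS (φ : B.Moment → B.Hist → Prop) (m : B.Moment) (_h : B.Hist) : Prop :=
  ∀ h', B.mem m h' → φ m h'

/-- next operator X -/
def xS (φ : B.Moment → B.Hist → Prop) (m : B.Moment) (h : B.Hist) : Prop :=
  φ (B.next m h) h

/-- last operator Y -/
def yS (φ : B.Moment → B.Hist → Prop) (m : B.Moment) (h : B.Hist) : Prop :=
  φ (B.prev m h) h

/-- knowledge operator K_α -/
def kS (a : B.Agent) (φ : B.Moment → B.Hist → Prop) (m : B.Moment) (h : B.Hist) : Prop :=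
  ∀ m' h', B.indist a (m, h) (m', h') → φ m' h'

/-- individual stit operator [α] -/
def stit (a : B.Agent) (φ : B.Moment → B.Hist → Prop) (m : B.Moment) (h : B.Hist) : Prop :=
  ∀ h', B.choice a m h h' → φ m h'

/-- grand coalition stit operator [Ags] -/
def stitAgs (φ : B.Moment → B.Hist → Prop) (m : B.Moment) (h : B.Hist) : Prop :=
  ∀ h', (∀ a, B.choice a m h h') → φ m h'

end BDT

/-- In any epistemic BDT model, ex interim knowledge implies ex post
knowledge: if K_α[α]Xφ holds at ⟨m,h⟩, then X K_α Y [Ags]Xφ holds at ⟨m,h⟩. -/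
theorem exInterim_implies_exPost (B : BDT) (a : B.Agent)
    (φ : B.Moment → B.Hist → Prop) (m : B.Moment) (h : B.Hist)
    (hmem : B.mem m h)
    (hint : B.kS a (B.stit a (B.xS φ)) m h) :
    B.xS (B.kS a (B.yS (B.stitAgs (B.xS φ)))) m h := by
  intro m' h' hind h'' hch
  exact hint _ _ (B.no_forget a m h m' h' hmem hind) h'' (hch a)
end

section
/- Semantic version of Duijf-style know-how collapse: in any Kripke model where ∼_α is an equivalence relation on worlds, R_□ is an equivalence relation, and the uniformity condition holds (if w ∼_α v then for every w' with wR_□w' there exists v' with vR_□v' and w' ∼_α v'), a world w satisfies ◇K_αψ if and only if it satisfies K_α◇K_αψ, where ◇ quantifies existentially over R_□-successors and K_α universally over ∼_α-successors. -/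
/-- Semantic Duijf-style know-how collapse. In any Kripke model
where ∼_α and R_□ are equivalence relations on worlds and the uniformity
condition holds (if w ∼_α v and w R_□ w' then there exists v' with v R_□ v'
and w' ∼_α v'), a world w satisfies ◇K_αψ iff it satisfies K_α◇K_αψ,
where ◇ quantifies existentially over R_□-successors and K_α universally
over ∼_α-successors. -/
theorem knowhow_collapse {W : Type*} (Rb Sim : W → W → Prop)
    (hRb : Equivalence Rb) (hSim : Equivalence Sim)
    (hUnif : ∀ w v w', Sim w v → Rb w w' → ∃ v', Rb v v' ∧ Sim w' v')
    (ψ : W → Prop) (w : W) :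
    (∃ v, Rb w v ∧ ∀ u, Sim v u → ψ u) ↔
      (∀ x, Sim w x → ∃ v, Rb x v ∧ ∀ u, Sim v u → ψ u) := by
  constructor
  · rintro ⟨v, hwv, hK⟩ x hwx
    obtain ⟨v', hxv', hvv'⟩ := hUnif w x v hwx hwv
    exact ⟨v', hxv', fun u hu => hK u (hSim.trans hvv' hu)⟩
  · intro h
    exact h w (hSim.refl w)
end

section
/- Canonical independence of agency: in the canonical model of a logic Λ containing S5 for □ and each [α], the schema □φ→[α]φ, and the axiom (IA): (⋀_{1≤i≤n} ◇[α_i]p_i) → ◇(⋀_{1≤i≤n}[α_i]p_i) for pairwise distinct agents α_1,...,α_n, the following holds: for every maximal consistent set w* and every selection of maximal consistent sets v_α ∈ \bar{w*} (one per agent α in a finite set Ags), the set ⋃_{α∈Ags} {[α]ψ : [α]ψ ∈ v_α} ∪ {□ψ : □ψ ∈ w*} is Λ-consistent. -/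
namespace Stmt8

variable (A : Type)

/-- Formulas with □ and [α] for each agent α in A. -/
inductive Form : Type
  | var : Nat → Form
  | bot : Form
  | imp : Form → Form → Form
  | box : Form → Form
  | act : A → Form → Form

namespace Form
variable {A}
def neg (φ : Form A) : Form A := imp φ bot
def conj (φ ψ : Form A) : Form A := neg (imp φ (neg ψ))
def top : Form A := neg bot
def dia (φ : Form A) : Form A := neg (box (neg φ))
def diaA (a : A) (φ : Form A) : Form A := neg (act a (neg φ))
end Form

variable {A}

def conjList : List (Form A) → Form A
  | [] => Form.top
  | φ :: l => Form.conj φ (conjList l)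

def Consistent (Prov : Form A → Prop) (Γ : Set (Form A)) : Prop :=
  ¬ ∃ l : List (Form A), (∀ φ ∈ l, φ ∈ Γ) ∧ Prov ((conjList l).imp Form.bot)

def MCS (Prov : Form A → Prop) (w : Set (Form A)) : Prop :=
  Consistent Prov w ∧ ∀ Γ, w ⊆ Γ → Consistent Prov Γ → Γ = w

open Form

/-- Bundle of the propositional Hilbert axioms. -/
structure HS (Prov : Form A → Prop) : Prop where
  mp : ∀ {φ ψ : Form A}, Prov (φ.imp ψ) → Prov φ → Prov ψ
  a1 : ∀ φ ψ : Form A, Prov (φ.imp (ψ.imp φ))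
  a2 : ∀ φ ψ χ : Form A, Prov ((φ.imp (ψ.imp χ)).imp ((φ.imp ψ).imp (φ.imp χ)))
  a3 : ∀ φ ψ : Form A, Prov (((φ.neg).imp (ψ.neg)).imp (ψ.imp φ))

/-- Derivations from a list of hypotheses. -/
inductive Der (Prov : Form A → Prop) : List (Form A) → Form A → Prop
  | prv {Γ φ} : Prov φ → Der Prov Γ φ
  | mem {Γ φ} : φ ∈ Γ → Der Prov Γ φ
  | app {Γ φ ψ} : Der Prov Γ (φ.imp ψ) → Der Prov Γ φ → Der Prov Γ ψ

namespace Der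

variable {Prov : Form A → Prop}

theorem provId (h : HS Prov) (φ : Form A) : Prov (φ.imp φ) :=
  h.mp (h.mp (h.a2 φ (φ.imp φ) φ) (h.a1 φ (φ.imp φ))) (h.a1 φ φ)

theorem weaken {Γ Γ' : List (Form A)} {φ} (d : Der Prov Γ φ)
    (hs : ∀ x ∈ Γ, x ∈ Γ') : Der Prov Γ' φ := by
  induction d with
  | prv hp => exact .prv hp
  | mem hx => exact .mem (hs _ hx)
  | app _ _ ih1 ih2 => exact .app ih1 ih2

theorem ded' (h : HS Prov) {Δ Γ : List (Form A)} {ψ φ}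
    (d : Der Prov Δ φ) (hΔ : ∀ x ∈ Δ, x = ψ ∨ x ∈ Γ) :
    Der Prov Γ (ψ.imp φ) := by
  induction d with
  | prv hp => exact .app (.prv (h.a1 _ _)) (.prv hp)
  | mem hx =>
    rcases hΔ _ hx with heq | hx'
    · subst heq; exact .prv (provId h _)
    · exact .app (.prv (h.a1 _ _)) (.mem hx')
  | app _ _ ih1 ih2 =>
    exact .app (.app (.prv (h.a2 _ _ _)) ih1) ih2

theorem ded (h : HS Prov) {Γ : List (Form A)} {ψ φ}
    (d : Der Prov (ψ :: Γ) φ) : Der Prov Γ (ψ.imp φ) :=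
  ded' h d (by intro x hx; simpa using hx)

theorem toProv' (h : HS Prov) {Γ : List (Form A)} {φ}
    (d : Der Prov Γ φ) (hΓ : Γ = []) : Prov φ := by
  induction d with
  | prv hp => exact hp
  | mem hx => subst hΓ; cases hx
  | app _ _ ih1 ih2 => exact h.mp ih1 ih2

theorem hyp {Γ : List (Form A)} (φ : Form A) (hx : φ ∈ Γ) : Der Prov Γ φ := .mem hx

theorem toProv (h : HS Prov) {φ} (d : Der Prov [] φ) : Prov φ := toProv' h d rfl

end Der

section Lemmas

variable {Prov : Form A → Prop}

theorem provEfq (h : HS Prov) (φ : Form A) : Prov (Form.bot.imp φ) :=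
  h.mp (h.a3 φ Form.bot) (h.mp (h.a1 _ _) (Der.provId h Form.bot))

theorem provDni (h : HS Prov) (φ : Form A) : Prov (φ.imp (neg (neg φ))) := by
  have d : Der Prov [φ.imp Form.bot, φ] Form.bot :=
    .app (.hyp (φ.imp Form.bot) (by simp)) (.hyp φ (by simp))
  exact ((d.ded h).ded h).toProv h

theorem provDne (h : HS Prov) (φ : Form A) : Prov ((neg (neg φ)).imp φ) :=
  h.mp (h.a3 φ (neg (neg φ))) (provDni h (neg φ))

theorem provTrans (h : HS Prov) {φ ψ χ : Form A}
    (d1 : Prov (φ.imp ψ)) (d2 : Prov (ψ.imp χ)) : Prov (φ.imp χ) := by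
  have d : Der Prov [φ] χ := .app (.prv d2) (.app (.prv d1) (.hyp φ (by simp)))
  exact (d.ded h).toProv h

theorem provAndI (h : HS Prov) (φ ψ : Form A) : Prov (φ.imp (ψ.imp (conj φ ψ))) := by
  have d : Der Prov [φ.imp (neg ψ), ψ, φ] Form.bot :=
    .app (.app (.hyp (φ.imp (neg ψ)) (by simp)) (.hyp φ (by simp))) (.hyp ψ (by simp))
  exact (((d.ded h).ded h).ded h).toProv h

theorem provAndE1 (h : HS Prov) (φ ψ : Form A) : Prov ((conj φ ψ).imp φ) := by
  have d1 : Der Prov [φ, φ.imp Form.bot, conj φ ψ] (neg ψ) :=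
    .app (.prv (provEfq h _)) (.app (.hyp (φ.imp Form.bot) (by simp)) (.hyp φ (by simp)))
  have d2 : Der Prov [φ.imp Form.bot, conj φ ψ] Form.bot :=
    .app (.hyp (conj φ ψ) (by simp)) (d1.ded h)
  have d3 : Der Prov [conj φ ψ] φ := .app (.prv (provDne h φ)) (d2.ded h)
  exact (d3.ded h).toProv h

theorem provAndE2 (h : HS Prov) (φ ψ : Form A) : Prov ((conj φ ψ).imp ψ) := by
  have d1 : Der Prov [ψ.imp Form.bot, conj φ ψ] (φ.imp (neg ψ)) :=
    .app (.prv (h.a1 (neg ψ) φ)) (.hyp (ψ.imp Form.bot) (by simp))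
  have d2 : Der Prov [ψ.imp Form.bot, conj φ ψ] Form.bot :=
    .app (.hyp (conj φ ψ) (by simp)) d1
  have d3 : Der Prov [conj φ ψ] ψ := .app (.prv (provDne h ψ)) (d2.ded h)
  exact (d3.ded h).toProv h

theorem provTop (h : HS Prov) : Prov (Form.top (A := A)) := Der.provId h Form.bot

theorem conjList_imp (h : HS Prov) {l : List (Form A)} {χ : Form A}
    (hl : ∀ φ ∈ l, Prov (χ.imp φ)) : Prov (χ.imp (conjList l)) := by
  induction l with
  | nil => exact h.mp (h.a1 _ _) (provTop h)
  | cons ψ t ih =>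
    have hψ := hl ψ (by simp)
    have ht : Prov (χ.imp (conjList t)) := ih (fun φ hφ => hl φ (by simp [hφ]))
    have hc : Der Prov [χ] χ := .hyp χ (by simp)
    have d : Der Prov [χ] (conjList (ψ :: t)) :=
      .app (.app (.prv (provAndI h _ _)) (.app (.prv hψ) hc)) (.app (.prv ht) hc)
    exact (d.ded h).toProv h

theorem conjList_mem (h : HS Prov) {l : List (Form A)} {φ : Form A} (hφ : φ ∈ l) :
    Prov ((conjList l).imp φ) := by
  induction l with
  | nil => cases hφ
  | cons ψ t ih =>
    rcases List.mem_cons.mp hφ with rfl | hφ'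
    · exact provAndE1 h _ _
    · exact provTrans h (provAndE2 h _ _) (ih hφ')

theorem derConjList (h : HS Prov) {Γ : List (Form A)} {l : List (Form A)}
    (hl : ∀ φ ∈ l, Der Prov Γ φ) : Der Prov Γ (conjList l) := by
  induction l with
  | nil => exact .prv (provTop h)
  | cons ψ t ih =>
    exact .app (.app (.prv (provAndI h _ _)) (hl ψ (by simp)))
      (ih (fun φ hφ => hl φ (by simp [hφ])))

end Lemmas

section Modal

variable {Prov : Form A → Prop}

/-- Generic regularity/distribution over conjList for a normal modality `m`. -/
theorem mapConjList (h : HS Prov) (m : Form A → Form A)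
    (km : ∀ φ ψ : Form A, Prov ((m (φ.imp ψ)).imp ((m φ).imp (m ψ))))
    (necm : ∀ {φ : Form A}, Prov φ → Prov (m φ))
    (l : List (Form A)) :
    Prov ((conjList (l.map m)).imp (m (conjList l))) := by
  induction l with
  | nil => exact h.mp (h.a1 _ _) (necm (provTop h))
  | cons ψ t ih =>
    -- m ψ → m (conjList t) → m (conj ψ (conjList t))
    have mAndI : Prov ((m ψ).imp ((m (conjList t)).imp (m (conj ψ (conjList t))))) :=
      provTrans h (h.mp (km _ _) (necm (provAndI h ψ (conjList t)))) (km _ _)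
    have hX : Der Prov [conjList ((ψ :: t).map m)] (conjList ((ψ :: t).map m)) :=
      .hyp _ (by simp)
    have d : Der Prov [conjList ((ψ :: t).map m)] (m (conjList (ψ :: t))) :=
      .app (.app (.prv mAndI) (.app (.prv (provAndE1 h _ _)) hX))
        (.app (.prv ih) (.app (.prv (provAndE2 h _ _)) hX))
    exact (d.ded h).toProv h

theorem regM (h : HS Prov) (m : Form A → Form A)
    (km : ∀ φ ψ : Form A, Prov ((m (φ.imp ψ)).imp ((m φ).imp (m ψ))))
    (necm : ∀ {φ : Form A}, Prov φ → Prov (m φ))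
    {φ ψ : Form A} (d : Prov (φ.imp ψ)) : Prov ((m φ).imp (m ψ)) :=
  h.mp (km _ _) (necm d)

theorem diaBoxConj (h : HS Prov)
    (kBox : ∀ φ ψ : Form A, Prov ((box (φ.imp ψ)).imp ((box φ).imp (box ψ))))
    (necBox : ∀ {φ : Form A}, Prov φ → Prov (box φ))
    (φ ψ : Form A) :
    Prov ((conj (dia φ) (box ψ)).imp (dia (conj φ ψ))) := by
  -- tautology: ψ → ¬(φ ∧ ψ) → ¬φ
  have taut : Prov (ψ.imp ((neg (conj φ ψ)).imp (neg φ))) := by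
    have d : Der Prov [φ, neg (conj φ ψ), ψ] Form.bot :=
      .app (.hyp (neg (conj φ ψ)) (by simp))
        (.app (.app (.prv (provAndI h φ ψ)) (.hyp φ (by simp))) (.hyp ψ (by simp)))
    exact (((d.ded h).ded h).ded h).toProv h
  have r1 : Prov ((box ψ).imp (box ((neg (conj φ ψ)).imp (neg φ)))) :=
    regM h box kBox necBox taut
  -- box ψ → box ¬(φ∧ψ) → box ¬φ
  have r2 : Prov ((box ψ).imp ((box (neg (conj φ ψ))).imp (box (neg φ)))) :=
    provTrans h r1 (kBox _ _)
  let C := conj (dia φ) (box ψ)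
  have hC : Der Prov [box (neg (conj φ ψ)), C] C := .hyp C (by simp)
  have d : Der Prov [box (neg (conj φ ψ)), C] Form.bot :=
    .app (.app (.prv (provAndE1 h (dia φ) (box ψ))) hC)
      (.app (.app (.prv r2) (.app (.prv (provAndE2 h (dia φ) (box ψ))) hC))
        (.hyp (box (neg (conj φ ψ))) (by simp)))
  have d2 : Der Prov [C] (dia (conj φ ψ)) := d.ded h
  exact (d2.ded h).toProv h

end Modal

section MCSLemmas

attribute [local instance] Classical.propDecidable

variable {Prov : Form A → Prop}

theorem mcs_of_list (h : HS Prov) {w : Set (Form A)} (hw : MCS Prov w)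
    {l : List (Form A)} (hl : ∀ φ ∈ l, φ ∈ w) {ψ : Form A}
    (hp : Prov ((conjList l).imp ψ)) : ψ ∈ w := by
  have hcons : Consistent Prov (insert ψ w) := by
    rintro ⟨m, hm, hmp⟩
    apply hw.1
    refine ⟨l ++ m.filter (fun χ => χ ≠ ψ), ?_, ?_⟩
    · intro φ hφ
      rcases List.mem_append.mp hφ with hφ | hφ
      · exact hl _ hφ
      · obtain ⟨hφm, hne⟩ := List.mem_filter.mp hφ
        rcases hm _ hφm with rfl | hφw
        · simp at hne
        · exact hφw
    · refine provTrans h ?_ hmp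
      apply conjList_imp h
      intro χ hχ
      by_cases hcψ : χ = ψ
      · subst hcψ
        exact provTrans h (conjList_imp h (fun φ hφ =>
          conjList_mem h (List.mem_append_left _ hφ))) hp
      · exact conjList_mem h (List.mem_append_right _
          (List.mem_filter.mpr ⟨hχ, by simpa using hcψ⟩))
  have := hw.2 (insert ψ w) (Set.subset_insert _ _) hcons
  rw [← this]; exact Set.mem_insert _ _

theorem mcs_thm (h : HS Prov) {w : Set (Form A)} (hw : MCS Prov w)
    {ψ : Form A} (hp : Prov ψ) : ψ ∈ w :=
  mcs_of_list h hw (l := []) (by simp) (h.mp (h.a1 _ _) hp)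

theorem mcs_mp (h : HS Prov) {w : Set (Form A)} (hw : MCS Prov w)
    {φ ψ : Form A} (hp : Prov (φ.imp ψ)) (hφ : φ ∈ w) : ψ ∈ w :=
  mcs_of_list h hw (l := [φ]) (by simpa using hφ)
    (provTrans h (provAndE1 h _ _) hp)

theorem mcs_conjList (h : HS Prov) {w : Set (Form A)} (hw : MCS Prov w)
    {l : List (Form A)} (hl : ∀ φ ∈ l, φ ∈ w) : conjList l ∈ w :=
  mcs_of_list h hw hl (Der.provId h _)

theorem mcs_no_contra (h : HS Prov) {w : Set (Form A)} (hw : MCS Prov w)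
    {φ : Form A} (h1 : φ ∈ w) (h2 : neg φ ∈ w) : False := by
  apply hw.1
  refine ⟨[φ, neg φ], by simp [h1, h2], ?_⟩
  have d : Der Prov [conjList [φ, neg φ]] Form.bot :=
    .app (.app (.prv (conjList_mem h (by simp : neg φ ∈ [φ, neg φ])))
        (.hyp _ (by simp)))
      (.app (.prv (conjList_mem h (by simp : φ ∈ [φ, neg φ]))) (.hyp _ (by simp)))
  exact (d.ded h).toProv h

theorem mcs_neg_complete (h : HS Prov) {w : Set (Form A)} (hw : MCS Prov w)
    {φ : Form A} (hn : φ ∉ w) : neg φ ∈ w := by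
  by_contra hnn
  have h1 : ¬ Consistent Prov (insert φ w) := by
    intro hc
    exact hn (by rw [← hw.2 (insert φ w) (Set.subset_insert _ _) hc]; exact Set.mem_insert _ _)
  have h2 : ¬ Consistent Prov (insert (neg φ) w) := by
    intro hc
    exact hnn (by rw [← hw.2 _ (Set.subset_insert _ _) hc]; exact Set.mem_insert _ _)
  rw [Consistent, not_not] at h1 h2
  obtain ⟨k, hk, hkp⟩ := h1
  obtain ⟨m, hm, hmp⟩ := h2
  set k' := k.filter (fun χ => χ ≠ φ) with hk'
  set m' := m.filter (fun χ => χ ≠ neg φ) with hm'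
  apply hw.1
  refine ⟨k' ++ m', ?_, ?_⟩
  · intro χ hχ
    rcases List.mem_append.mp hχ with hχ | hχ
    · obtain ⟨hχk, hne⟩ := List.mem_filter.mp hχ
      rcases hk _ hχk with rfl | hχw
      · simp at hne
      · exact hχw
    · obtain ⟨hχm, hne⟩ := List.mem_filter.mp hχ
      rcases hm _ hχm with rfl | hχw
      · simp at hne
      · exact hχw
  · set C := conjList (k' ++ m') with hC
    -- from φ and C derive ⊥
    have dk : Der Prov [φ, C] Form.bot := by
      refine .app (.prv hkp) (derConjList h ?_)
      intro χ hχ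
      by_cases hcφ : χ = φ
      · exact .hyp _ (by simp [hcφ])
      · exact .app (.prv (conjList_mem h (List.mem_append_left _
          (List.mem_filter.mpr ⟨hχ, by simpa using hcφ⟩)))) (.hyp C (by simp))
    have dm : Der Prov [neg φ, C] Form.bot := by
      refine .app (.prv hmp) (derConjList h ?_)
      intro χ hχ
      by_cases hcφ : χ = neg φ
      · exact .hyp _ (by simp [hcφ])
      · exact .app (.prv (conjList_mem h (List.mem_append_right _
          (List.mem_filter.mpr ⟨hχ, by simpa using hcφ⟩)))) (.hyp C (by simp))
    have d : Der Prov [C] Form.bot := .app (dm.ded h) (dk.ded h)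
    exact (d.ded h).toProv h

end MCSLemmas

section Pair

variable {Prov : Form A → Prop}

theorem provPairConj (h : HS Prov) (x y : Form A) :
    Prov ((conjList [x, y]).imp (conj x y)) := by
  have d : Der Prov [conjList [x, y]] (conj x y) :=
    .app (.app (.prv (provAndI h x y))
        (.app (.prv (conjList_mem h (by simp : x ∈ [x, y]))) (.hyp _ (by simp))))
      (.app (.prv (conjList_mem h (by simp : y ∈ [x, y]))) (.hyp _ (by simp)))
  exact (d.ded h).toProv h

end Pair

/-- Canonical independence of agency. In the canonical model of a
logic Λ containing S5 for □ and each [α], the schema □φ→[α]φ, and the axiom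
(IA), for every maximal consistent set w* and every selection of maximal
consistent sets v_α ∈ \bar{w*} (one per agent in the finite set Ags), the set
⋃_{α∈Ags} {[α]ψ : [α]ψ ∈ v_α} ∪ {□ψ : □ψ ∈ w*} is Λ-consistent. -/
theorem canonical_independence_of_agency [Fintype A] [DecidableEq A]
    (Prov : Form A → Prop)
    (mp : ∀ {φ ψ : Form A}, Prov (φ.imp ψ) → Prov φ → Prov ψ)
    (a1 : ∀ φ ψ : Form A, Prov (φ.imp (ψ.imp φ)))
    (a2 : ∀ φ ψ χ : Form A, Prov ((φ.imp (ψ.imp χ)).imp ((φ.imp ψ).imp (φ.imp χ))))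
    (a3 : ∀ φ ψ : Form A, Prov (((φ.neg).imp (ψ.neg)).imp (ψ.imp φ)))
    (kBox : ∀ φ ψ : Form A, Prov ((box (φ.imp ψ)).imp ((box φ).imp (box ψ))))
    (tBox : ∀ φ : Form A, Prov ((box φ).imp φ))
    (fourBox : ∀ φ : Form A, Prov ((box φ).imp (box (box φ))))
    (fiveBox : ∀ φ : Form A, Prov ((dia φ).imp (box (dia φ))))
    (necBox : ∀ {φ : Form A}, Prov φ → Prov (box φ))
    (kA : ∀ (a : A) (φ ψ : Form A),
      Prov ((act a (φ.imp ψ)).imp ((act a φ).imp (act a ψ))))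
    (tA : ∀ (a : A) (φ : Form A), Prov ((act a φ).imp φ))
    (fourA : ∀ (a : A) (φ : Form A), Prov ((act a φ).imp (act a (act a φ))))
    (fiveA : ∀ (a : A) (φ : Form A), Prov ((diaA a φ).imp (act a (diaA a φ))))
    (necA : ∀ (a : A) {φ : Form A}, Prov φ → Prov (act a φ))
    (set_ax : ∀ (a : A) (φ : Form A), Prov ((box φ).imp (act a φ)))
    -- (IA): for pairwise distinct agents α₁,…,α_n and formulas p₁,…,p_n,
    -- ⋀◇[α_i]p_i → ◇⋀[α_i]p_i
    (ia : ∀ l : List (A × Form A), (l.map Prod.fst).Nodup →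
      Prov ((conjList (l.map fun p => dia (act p.1 p.2))).imp
        (dia (conjList (l.map fun p => act p.1 p.2))))) :
    ∀ (wstar : Set (Form A)) (v : A → Set (Form A)),
      MCS Prov wstar → (∀ a, MCS Prov (v a)) →
      (∀ (a : A) (φ : Form A), box φ ∈ wstar → φ ∈ v a) →
      Consistent Prov
        ((⋃ a : A, {φ : Form A | (∃ χ, φ = act a χ) ∧ φ ∈ v a}) ∪
          {φ : Form A | (∃ χ, φ = box χ) ∧ φ ∈ wstar}) := by
  intro wstar v hw hv hbox
  have h : HS Prov := ⟨fun {φ ψ} => mp, a1, a2, a3⟩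
  rintro ⟨l, hl, hlp⟩
  -- extract the act- and box- components of l
  set Acts : A → List (Form A) := fun a => l.filterMap (fun φ =>
    match φ with
    | Form.act b χ => if b = a then some χ else none
    | _ => none) with hActs
  set Boxes : List (Form A) := l.filterMap (fun φ =>
    match φ with
    | Form.box χ => some χ
    | _ => none) with hBoxes
  have hActsMem : ∀ (a : A) (χ : Form A), χ ∈ Acts a ↔ Form.act a χ ∈ l := by
    intro a χ
    rw [hActs]
    simp only [List.mem_filterMap]
    constructor
    · rintro ⟨φ, hφl, hf⟩
      cases φ <;> simp only [] at hf
      · exact absurd hf (by simp)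
      · exact absurd hf (by simp)
      · exact absurd hf (by simp)
      · exact absurd hf (by simp)
      · rename_i b χ'
        split at hf
        · rename_i hba; cases hf; subst hba; exact hφl
        · cases hf
    · intro hal
      exact ⟨Form.act a χ, hal, by simp⟩
  have hBoxesMem : ∀ χ : Form A, χ ∈ Boxes ↔ Form.box χ ∈ l := by
    intro χ
    rw [hBoxes]
    simp only [List.mem_filterMap]
    constructor
    · rintro ⟨φ, hφl, hf⟩
      cases φ <;> simp only [] at hf
      · exact absurd hf (by simp)
      · exact absurd hf (by simp)
      · exact absurd hf (by simp)
      · cases hf; exact hφl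
      · exact absurd hf (by simp)
    · intro hbl
      exact ⟨Form.box χ, hbl, rfl⟩
  have hActsv : ∀ (a : A) (χ : Form A), χ ∈ Acts a → Form.act a χ ∈ v a := by
    intro a χ hχ
    have hmem := hl _ ((hActsMem a χ).mp hχ)
    rcases hmem with hmem | hmem
    · obtain ⟨S, ⟨b, rfl⟩, hS⟩ := hmem
      obtain ⟨⟨χ', hχ'⟩, hvb⟩ := hS
      obtain ⟨rfl, rfl⟩ : a = b ∧ χ = χ' := by
        have := hχ'
        rw [Form.act.injEq] at this
        exact this
      exact hvb
    · obtain ⟨⟨χ', hχ'⟩, _⟩ := hmem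
      exact absurd hχ' (by simp)
  have hBoxesw : ∀ χ : Form A, χ ∈ Boxes → Form.box χ ∈ wstar := by
    intro χ hχ
    have hmem := hl _ ((hBoxesMem χ).mp hχ)
    rcases hmem with hmem | hmem
    · obtain ⟨S, ⟨b, rfl⟩, hS⟩ := hmem
      obtain ⟨⟨χ', hχ'⟩, _⟩ := hS
      exact absurd hχ' (by simp)
    · exact hmem.2
  have hShape : ∀ φ ∈ l, (∃ a χ, φ = Form.act a χ ∧ χ ∈ Acts a) ∨
      (∃ χ, φ = Form.box χ ∧ χ ∈ Boxes) := by
    intro φ hφ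
    rcases hl _ hφ with hmem | hmem
    · obtain ⟨S, ⟨b, rfl⟩, hS⟩ := hmem
      obtain ⟨⟨χ, rfl⟩, _⟩ := hS
      exact Or.inl ⟨b, χ, rfl, (hActsMem b χ).mpr hφ⟩
    · obtain ⟨⟨χ, rfl⟩, _⟩ := hmem
      exact Or.inr ⟨χ, rfl, (hBoxesMem χ).mpr hφ⟩
  -- Step 1: [a] (⋀ Acts a) ∈ v a
  set Ca : A → Form A := fun a => conjList (Acts a) with hCadef
  have hCa : ∀ a, Form.act a (Ca a) ∈ v a := by
    intro a
    apply mcs_of_list h (hv a) (l := (Acts a).map (Form.act a))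
    · intro φ hφ
      obtain ⟨χ, hχ, rfl⟩ := List.mem_map.mp hφ
      exact hActsv a χ hχ
    · exact mapConjList h (Form.act a) (kA a) (fun {φ} => necA a) (Acts a)
  -- Step 2: ◇[a](Ca a) ∈ wstar
  have hdia : ∀ a, dia (Form.act a (Ca a)) ∈ wstar := by
    intro a
    by_contra hnd
    have h1 : neg (dia (Form.act a (Ca a))) ∈ wstar := mcs_neg_complete h hw hnd
    have h2 : Form.box (neg (Form.act a (Ca a))) ∈ wstar :=
      mcs_mp h hw (provDne h (Form.box (neg (Form.act a (Ca a))))) h1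
    exact mcs_no_contra h (hv a) (hCa a) (hbox a _ h2)
  -- Step 3: (IA)
  set agents : List A := (Finset.univ : Finset A).toList with hagents
  set pairs : List (A × Form A) := agents.map (fun a => (a, Ca a)) with hpairs
  have hnodup : (pairs.map Prod.fst).Nodup := by
    rw [hpairs, List.map_map]
    have heq : (Prod.fst ∘ fun a => (a, Ca a)) = (id : A → A) := rfl
    rw [heq, List.map_id]
    exact (Finset.univ : Finset A).nodup_toList
  have hconj : conjList (pairs.map fun p => dia (Form.act p.1 p.2)) ∈ wstar := by
    apply mcs_conjList h hw
    intro φ hφ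
    obtain ⟨p, hp, rfl⟩ := List.mem_map.mp hφ
    obtain ⟨a, _, rfl⟩ := List.mem_map.mp hp
    exact hdia a
  set inner : Form A := conjList (pairs.map fun p => Form.act p.1 p.2) with hinner
  have hdinner : dia inner ∈ wstar := mcs_mp h hw (ia pairs hnodup) hconj
  -- Step 4: □B ∈ wstar where B = ⋀ box-formulas
  set B : Form A := conjList (Boxes.map Form.box) with hBdef
  have hboxB : Form.box B ∈ wstar := by
    apply mcs_of_list h hw (l := (Boxes.map Form.box).map Form.box)
    · intro φ hφ
      obtain ⟨ψ, hψ, rfl⟩ := List.mem_map.mp hφ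
      obtain ⟨χ, hχ, rfl⟩ := List.mem_map.mp hψ
      exact mcs_mp h hw (fourBox χ) (hBoxesw χ hχ)
    · exact mapConjList h Form.box kBox (fun {φ} => necBox) (Boxes.map Form.box)
  -- Step 5: ◇(inner ∧ B) ∈ wstar
  have hcb : conj (dia inner) (Form.box B) ∈ wstar := by
    apply mcs_of_list h hw (l := [dia inner, Form.box B])
    · intro φ hφ
      rcases List.mem_cons.mp hφ with rfl | hφ
      · exact hdinner
      · rcases List.mem_cons.mp hφ with rfl | hφ
        · exact hboxB
        · cases hφ
    · exact provPairConj h _ _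
  have hE : dia (conj inner B) ∈ wstar :=
    mcs_mp h hw (diaBoxConj h kBox (fun {φ} => necBox) inner B) hcb
  -- Step 6: inner ∧ B provably implies conjList l, hence ⊥
  have himp : Prov ((conj inner B).imp (conjList l)) := by
    apply conjList_imp h
    intro φ hφ
    rcases hShape φ hφ with ⟨a, χ, rfl, hχ⟩ | ⟨χ, rfl, hχ⟩
    · refine provTrans h (provAndE1 h _ _) (provTrans h (conjList_mem h ?_)
        (regM h (Form.act a) (kA a) (fun {ψ} => necA a) (conjList_mem h hχ)))
      exact List.mem_map.mpr ⟨(a, Ca a),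
        List.mem_map.mpr ⟨a, by simp [hagents], rfl⟩, rfl⟩
    · exact provTrans h (provAndE2 h _ _)
        (conjList_mem h (List.mem_map.mpr ⟨χ, hχ, rfl⟩))
  have hbot : Prov ((conj inner B).imp Form.bot) := provTrans h himp hlp
  have hnE : Form.box (neg (conj inner B)) ∈ wstar := mcs_thm h hw (necBox hbot)
  exact mcs_no_contra h hw hnE hE


end Stmt8
end

section
/- In a super-additive Kripke-exstit n-model with irreflexive next/last relations, if wR_□w' then for every v in h^-[w] there exists v' in h^-[w'] with vR_{Ags}v', where h^-[w] is the set of R_Y-ancestors of w (Lemma on history matching via group action). -/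
/-- Composition of relations: w (R ∘ S) v iff there is u with w R u and u S v. -/
def RelComp {W : Type*} (R S : W → W → Prop) (w v : W) : Prop :=
  ∃ u, R w u ∧ S u v

/-- In a super-additive Kripke-exstit n-model with irreflexive
next/last relations, if w R_□ w' then for every v ∈ h^-[w] (an R_Y-ancestor of
w) there exists v' ∈ h^-[w'] with v R_{Ags} v'. Here R_□ and R_{Ags} are
equivalence relations with R_{Ags} ⊆ R_□, R_X and R_Y are serial,
deterministic, mutually inverse and irreflexive, and the condition (NAgs)_K
holds: if v R_{Ags} v', v' R_X o' and o' R_□ o then there is z with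
v R_{Ags} z and z R_X o. -/
theorem history_matching {W : Type*} (Rb RX RY RAgs : W → W → Prop)
    (hRb : Equivalence Rb) (hRAgs : Equivalence RAgs)
    (hSub : ∀ w v, RAgs w v → Rb w v)
    (hXser : ∀ w, ∃ v, RX w v) (hXdet : ∀ w v v', RX w v → RX w v' → v = v')
    (hYser : ∀ w, ∃ v, RY w v) (hYdet : ∀ w v v', RY w v → RY w v' → v = v')
    (hXY : ∀ w v, RelComp RX RY w v ↔ w = v)
    (hYX : ∀ w v, RelComp RY RX w v ↔ w = v)
    (hXirr : ∀ w, ¬ RX w w) (hYirr : ∀ w, ¬ RY w w)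
    (hNAgs : ∀ v o, RelComp RAgs (RelComp RX Rb) v o → RelComp RAgs RX v o) :
    ∀ w w', Rb w w' →
      ∀ v, Relation.TransGen RY w v →
        ∃ v', Relation.TransGen RY w' v' ∧ RAgs v v' := by
  -- key step: if RY a b and Rb a a', then ∃ z, RY a' z ∧ RAgs b z
  have step : ∀ a b a', RY a b → Rb a a' → ∃ z, RY a' z ∧ RAgs b z := by
    intro a b a' hab hba
    -- RX b a
    have hXba : RX b a := by
      obtain ⟨u, hu1, hu2⟩ := (hYX a a).2 rfl
      rwa [hYdet a u b hu1 hab] at hu2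
    obtain ⟨z, hz1, hz2⟩ := hNAgs b a' ⟨b, hRAgs.refl b, a, hXba, hba⟩
    refine ⟨z, ?_, hz1⟩
    obtain ⟨u, hu1, hu2⟩ := (hXY z z).2 rfl
    rwa [hXdet z u a' hu1 hz2] at hu2
  intro w w' hww' v hv
  induction hv with
  | single h =>
    obtain ⟨z, hz1, hz2⟩ := step w _ w' h hww'
    exact ⟨z, Relation.TransGen.single hz1, hz2⟩
  | tail _ h ih =>
    obtain ⟨a', ha1, ha2⟩ := ih
    obtain ⟨z, hz1, hz2⟩ := step _ _ a' h (hSub _ _ ha2)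
    exact ⟨z, ha1.tail hz1, hz2⟩
end

section
/- In any normal bimodal logic with serial-deterministic temporal operators X and Y satisfying the axioms YXφ ↔ φ, XYφ ↔ φ, Xφ ↔ ¬X¬φ, Yφ ↔ ¬Y¬φ, together with an S5 modality □ and an S5 modality [Ags] satisfying □φ→[Ags]φ and [Ags]Xφ→[Ags]X□φ, the theorem □Xφ → X□φ is derivable; moreover, from this theorem, necessitation for Y and □, and XYφ↔φ, the theorem Y□φ → □Yφ is derivable. -/
namespace Stmt15

/-- Formulas with temporal operators X, Y, historical necessity □ and [Ags]. -/
inductive Form : Type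
  | var : Nat → Form
  | bot : Form
  | imp : Form → Form → Form
  | next : Form → Form
  | last : Form → Form
  | box : Form → Form
  | ags : Form → Form

namespace Form
def neg (φ : Form) : Form := imp φ bot
def conj (φ ψ : Form) : Form := neg (imp φ (neg ψ))
def equiv (φ ψ : Form) : Form := conj (imp φ ψ) (imp ψ φ)
def dia (φ : Form) : Form := neg (box (neg φ))
def diaAgs (φ : Form) : Form := neg (ags (neg φ))
end Form

open Form

/-- In any normal bimodal logic with serial-deterministic
temporal operators X, Y satisfying YXφ↔φ, XYφ↔φ, Xφ↔¬X¬φ, Yφ↔¬Y¬φ, together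
with S5 modalities □ and [Ags] satisfying □φ→[Ags]φ and [Ags]Xφ→[Ags]X□φ,
the theorem (NX): □Xφ → X□φ is derivable; moreover the theorem
(NY): Y□φ → □Yφ is derivable. -/
theorem NX_and_NY_derivable (Prov : Form → Prop)
    (mp : ∀ {φ ψ : Form}, Prov (φ.imp ψ) → Prov φ → Prov ψ)
    (a1 : ∀ φ ψ : Form, Prov (φ.imp (ψ.imp φ)))
    (a2 : ∀ φ ψ χ : Form, Prov ((φ.imp (ψ.imp χ)).imp ((φ.imp ψ).imp (φ.imp χ))))
    (a3 : ∀ φ ψ : Form, Prov (((φ.neg).imp (ψ.neg)).imp (ψ.imp φ)))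
    -- normality and necessitation for all operators
    (kX : ∀ φ ψ : Form, Prov ((next (φ.imp ψ)).imp ((next φ).imp (next ψ))))
    (necX : ∀ {φ : Form}, Prov φ → Prov (next φ))
    (kY : ∀ φ ψ : Form, Prov ((last (φ.imp ψ)).imp ((last φ).imp (last ψ))))
    (necY : ∀ {φ : Form}, Prov φ → Prov (last φ))
    (kBox : ∀ φ ψ : Form, Prov ((box (φ.imp ψ)).imp ((box φ).imp (box ψ))))
    (necBox : ∀ {φ : Form}, Prov φ → Prov (box φ))
    (kAgs : ∀ φ ψ : Form, Prov ((ags (φ.imp ψ)).imp ((ags φ).imp (ags ψ))))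
    (necAgs : ∀ {φ : Form}, Prov φ → Prov (ags φ))
    -- S5 for □ and [Ags]
    (tBox : ∀ φ : Form, Prov ((box φ).imp φ))
    (fourBox : ∀ φ : Form, Prov ((box φ).imp (box (box φ))))
    (fiveBox : ∀ φ : Form, Prov ((dia φ).imp (box (dia φ))))
    (tAgs : ∀ φ : Form, Prov ((ags φ).imp φ))
    (fourAgs : ∀ φ : Form, Prov ((ags φ).imp (ags (ags φ))))
    (fiveAgs : ∀ φ : Form, Prov ((diaAgs φ).imp (ags (diaAgs φ))))
    -- temporal axioms
    (in1 : ∀ φ : Form, Prov (equiv (last (next φ)) φ))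
    (in2 : ∀ φ : Form, Prov (equiv (next (last φ)) φ))
    (detX : ∀ φ : Form, Prov (equiv (next φ) (neg (next (neg φ)))))
    (detY : ∀ φ : Form, Prov (equiv (last φ) (neg (last (neg φ)))))
    -- interaction axioms
    (setga : ∀ φ : Form, Prov ((box φ).imp (ags φ)))
    (nags : ∀ φ : Form, Prov ((ags (next φ)).imp (ags (next (box φ))))) :
    (∀ φ : Form, Prov ((box (next φ)).imp (next (box φ)))) ∧
      (∀ φ : Form, Prov ((last (box φ)).imp (box (last φ)))) := by
  -- propositional helpers
  have idp : ∀ φ : Form, Prov (φ.imp φ) := by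
    intro φ
    have h1 := a2 φ (φ.imp φ) φ
    have h2 := a1 φ (φ.imp φ)
    have h3 := a1 φ φ
    exact mp (mp h1 h2) h3
  have bcomb : ∀ {φ ψ χ : Form}, Prov (ψ.imp χ) → Prov ((φ.imp ψ).imp (φ.imp χ)) := by
    intro φ ψ χ h
    exact mp (a2 φ ψ χ) (mp (a1 (ψ.imp χ) φ) h)
  have trans : ∀ {φ ψ χ : Form}, Prov (φ.imp ψ) → Prov (ψ.imp χ) → Prov (φ.imp χ) := by
    intro φ ψ χ h1 h2
    exact mp (bcomb h2) h1
  have exf : ∀ φ : Form, Prov (Form.bot.imp φ) := by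
    intro φ
    have h1 : Prov ((φ.neg).imp (Form.bot.imp Form.bot)) :=
      mp (a1 (Form.bot.imp Form.bot) φ.neg) (idp Form.bot)
    exact mp (a3 φ Form.bot) h1
  have dni : ∀ φ : Form, Prov (φ.imp φ.neg.neg) := by
    intro φ
    have h1 : Prov ((φ.neg.imp φ).imp φ.neg.neg) :=
      mp (a2 φ.neg φ Form.bot) (idp φ.neg)
    exact trans (a1 φ φ.neg) h1
  have dne : ∀ φ : Form, Prov (φ.neg.neg.imp φ) := by
    intro φ
    exact mp (a3 φ φ.neg.neg) (dni φ.neg)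
  have proj1 : ∀ {φ ψ : Form}, Prov (φ.conj ψ) → Prov φ := by
    intro φ ψ h
    have t1 : Prov (φ.neg.imp (φ.imp ψ.neg)) := bcomb (exf ψ.neg)
    exact mp (dne φ) (trans t1 h)
  have proj2 : ∀ {φ ψ : Form}, Prov (φ.conj ψ) → Prov ψ := by
    intro φ ψ h
    exact mp (dne ψ) (trans (a1 ψ.neg φ) h)
  -- modal monotonicity
  have monoBox : ∀ {φ ψ : Form}, Prov (φ.imp ψ) → Prov ((box φ).imp (box ψ)) := by
    intro φ ψ h
    exact mp (kBox φ ψ) (necBox h)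
  -- (NX)
  have NX : ∀ φ : Form, Prov ((box (next φ)).imp (next (box φ))) := by
    intro φ
    exact trans (trans (setga (next φ)) (nags φ)) (tAgs (next (box φ)))
  refine ⟨NX, ?_⟩
  -- (NY)
  intro φ
  have h1 : Prov (φ.imp (next (last φ))) := proj2 (in2 φ)
  have h2 : Prov ((box φ).imp (box (next (last φ)))) := monoBox h1
  have h3 : Prov ((box φ).imp (next (box (last φ)))) := trans h2 (NX (last φ))
  have h4 : Prov ((last (box φ)).imp (last (next (box (last φ))))) :=
    mp (kY (box φ) (next (box (last φ)))) (necY h3)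
  have h5 : Prov ((last (next (box (last φ)))).imp (box (last φ))) := proj1 (in1 (box (last φ)))
  exact trans h4 h5


end Stmt15
end

section
/- Choice-boundedness from the counting axiom: in the canonical model of Λ_n, which includes the axiom (AgsPC_n): ⋀_{1≤k≤n} ◇((⋀_{1≤i≤k−1}¬φ_i) ∧ [Ags]φ_k) → ⋁_{1≤k≤n}φ_k, for every maximal consistent set w the partition of \bar{w} induced by the canonical relation R_{Ags} has at most n cells. -/
namespace Stmt16

/-- Formulas with □ and [Ags]. -/
inductive Form : Type
  | var : Nat → Form
  | bot : Form
  | imp : Form → Form → Form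
  | box : Form → Form
  | ags : Form → Form

namespace Form
def neg (φ : Form) : Form := imp φ bot
def conj (φ ψ : Form) : Form := neg (imp φ (neg ψ))
def disj (φ ψ : Form) : Form := (neg φ).imp ψ
def top : Form := neg bot
def dia (φ : Form) : Form := neg (box (neg φ))
def diaAgs (φ : Form) : Form := neg (ags (neg φ))
end Form

def conjList : List Form → Form
  | [] => Form.top
  | φ :: l => Form.conj φ (conjList l)

def disjList : List Form → Form
  | [] => Form.bot
  | φ :: l => Form.disj φ (disjList l)

/-- The antecedent conjuncts of (AgsPC_n): for the list φ₁,…,φ_n, the k-th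
conjunct is ◇((¬φ₁∧…∧¬φ_{k-1}) ∧ [Ags]φ_k). -/
def anteList (pre : List Form) : List Form → List Form
  | [] => []
  | φ :: rest =>
      Form.dia (Form.conj (conjList (pre.map Form.neg)) (Form.ags φ)) ::
        anteList (pre ++ [φ]) rest

def Consistent (Prov : Form → Prop) (Γ : Set Form) : Prop :=
  ¬ ∃ l : List Form, (∀ φ ∈ l, φ ∈ Γ) ∧ Prov ((conjList l).imp Form.bot)

def MCS (Prov : Form → Prop) (w : Set Form) : Prop :=
  Consistent Prov w ∧ ∀ Γ, w ⊆ Γ → Consistent Prov Γ → Γ = w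

open Form

/-! ### Auxiliary Hilbert-system machinery -/

/-- Bundle of the propositional + needed modal axioms. -/
structure Sys (Prov : Form → Prop) : Prop where
  mp : ∀ {φ ψ : Form}, Prov (φ.imp ψ) → Prov φ → Prov ψ
  a1 : ∀ φ ψ : Form, Prov (φ.imp (ψ.imp φ))
  a2 : ∀ φ ψ χ : Form, Prov ((φ.imp (ψ.imp χ)).imp ((φ.imp ψ).imp (φ.imp χ)))
  a3 : ∀ φ ψ : Form, Prov (((φ.neg).imp (ψ.neg)).imp (ψ.imp φ))
  fiveBox : ∀ φ : Form, Prov ((dia φ).imp (box (dia φ)))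
  kAgs : ∀ φ ψ : Form, Prov ((ags (φ.imp ψ)).imp ((ags φ).imp (ags ψ)))
  necAgs : ∀ {φ : Form}, Prov φ → Prov (ags φ)

namespace Sys

variable {Prov : Form → Prop} (H : Sys Prov)
include H

theorem prov_id (φ : Form) : Prov (φ.imp φ) :=
  H.mp (H.mp (H.a2 φ (φ.imp φ) φ) (H.a1 φ (φ.imp φ))) (H.a1 φ φ)

/-- Hypothetical syllogism. -/
theorem hs {φ ψ χ : Form} (h1 : Prov (ψ.imp χ)) (h2 : Prov (φ.imp ψ)) :
    Prov (φ.imp χ) :=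
  H.mp (H.mp (H.a2 φ ψ χ) (H.mp (H.a1 (ψ.imp χ) φ) h1)) h2

theorem impD {χ φ ψ : Form} (h1 : Prov (χ.imp (φ.imp ψ))) (h2 : Prov (χ.imp φ)) :
    Prov (χ.imp ψ) :=
  H.mp (H.mp (H.a2 χ φ ψ) h1) h2

theorem lift {χ φ : Form} (h : Prov φ) : Prov (χ.imp φ) :=
  H.mp (H.a1 φ χ) h

theorem prov_dne (φ : Form) : Prov ((φ.neg.neg).imp φ) := by
  have s1 : Prov ((φ.neg.neg).imp ((φ.neg.neg.neg.neg).imp φ.neg.neg)) :=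
    H.a1 _ _
  have s2 : Prov (((φ.neg.neg.neg.neg).imp φ.neg.neg).imp ((φ.neg).imp φ.neg.neg.neg)) :=
    H.a3 (φ.neg.neg.neg) (φ.neg)
  have s3 : Prov (((φ.neg).imp φ.neg.neg.neg).imp ((φ.neg.neg).imp φ)) :=
    H.a3 φ (φ.neg.neg)
  have chain : Prov ((φ.neg.neg).imp ((φ.neg.neg).imp φ)) := H.hs s3 (H.hs s2 s1)
  -- contraction
  exact H.mp (H.mp (H.a2 (φ.neg.neg) (φ.neg.neg) φ) chain) (H.prov_id _)

theorem prov_dni (φ : Form) : Prov (φ.imp (φ.neg.neg)) :=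
  H.mp (H.a3 (φ.neg.neg) φ) (H.prov_dne (φ.neg))

end Sys

/-- Derivations from a list of hypotheses. -/
inductive Drv (Prov : Form → Prop) : List Form → Form → Prop
  | ax {Γ : List Form} {φ : Form} : Prov φ → Drv Prov Γ φ
  | hyp {Γ : List Form} {φ : Form} : φ ∈ Γ → Drv Prov Γ φ
  | mp {Γ : List Form} {φ ψ : Form} :
      Drv Prov Γ (φ.imp ψ) → Drv Prov Γ φ → Drv Prov Γ ψ

namespace Drv

variable {Prov : Form → Prop}

theorem ded (H : Sys Prov) {Γ : List Form} {ψ φ : Form}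
    (h : Drv Prov (ψ :: Γ) φ) : Drv Prov Γ (ψ.imp φ) := by
  induction h with
  | ax h => exact .mp (.ax (H.a1 _ _)) (.ax h)
  | hyp h =>
    rcases List.mem_cons.1 h with h | h
    · subst h; exact .ax (H.prov_id _)
    · exact .mp (.ax (H.a1 _ _)) (.hyp h)
  | mp _ _ ih1 ih2 => exact .mp (.mp (.ax (H.a2 _ _ _)) ih1) ih2

theorem toProv (H : Sys Prov) {φ : Form} (h : Drv Prov [] φ) : Prov φ := by
  induction h with
  | ax h => exact h
  | hyp h => exact absurd h List.not_mem_nil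
  | mp _ _ ih1 ih2 => exact H.mp ih1 ih2

end Drv

namespace Sys

variable {Prov : Form → Prop} (H : Sys Prov)
include H

theorem prov_conj_intro (φ ψ : Form) : Prov (φ.imp (ψ.imp (conj φ ψ))) := by
  apply Drv.toProv H
  apply Drv.ded H; apply Drv.ded H; apply Drv.ded H
  -- hypotheses: [φ.imp ψ.neg, ψ, φ] ⊢ bot
  have hφ : Drv Prov [φ.imp ψ.neg, ψ, φ] φ := .hyp (by simp)
  have hψ : Drv Prov [φ.imp ψ.neg, ψ, φ] ψ := .hyp (by simp)
  have himp : Drv Prov [φ.imp ψ.neg, ψ, φ] (φ.imp ψ.neg) := .hyp (by simp)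
  have hn : Drv Prov [φ.imp ψ.neg, ψ, φ] (ψ.imp bot) := himp.mp hφ
  exact hn.mp hψ

theorem prov_conj_left (φ ψ : Form) : Prov ((conj φ ψ).imp φ) := by
  apply Drv.toProv H
  apply Drv.ded H
  -- [conj φ ψ] ⊢ φ
  have hneg : Drv Prov [conj φ ψ] (φ.neg.neg) := by
    apply Drv.ded H
    -- [φ.neg, conj φ ψ] ⊢ bot
    have h1 : Drv Prov [φ.neg, conj φ ψ] (φ.imp ψ.neg) := by
      apply Drv.ded H
      apply Drv.ded H
      -- [ψ, φ, φ.neg, conj φ ψ] ⊢ bot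
      have ha : Drv Prov [ψ, φ, φ.neg, conj φ ψ] φ := .hyp (by simp)
      have hb : Drv Prov [ψ, φ, φ.neg, conj φ ψ] (φ.imp bot) := .hyp (by simp [neg])
      exact hb.mp ha
    have hco : Drv Prov [φ.neg, conj φ ψ] ((φ.imp ψ.neg).imp bot) := .hyp (by simp [conj, neg])
    exact hco.mp h1
  exact .mp (.ax (H.prov_dne φ)) hneg

theorem prov_conj_right (φ ψ : Form) : Prov ((conj φ ψ).imp ψ) := by
  apply Drv.toProv H
  apply Drv.ded H
  have hneg : Drv Prov [conj φ ψ] (ψ.neg.neg) := by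
    apply Drv.ded H
    have hn : Drv Prov [ψ.neg, conj φ ψ] ψ.neg := .hyp (by simp)
    have h1 : Drv Prov [ψ.neg, conj φ ψ] (φ.imp ψ.neg) :=
      .mp (.ax (H.a1 ψ.neg φ)) hn
    have hco : Drv Prov [ψ.neg, conj φ ψ] ((φ.imp ψ.neg).imp bot) := .hyp (by simp [conj, neg])
    exact hco.mp h1
  exact .mp (.ax (H.prov_dne ψ)) hneg

theorem prov_top : Prov Form.top := H.prov_id Form.bot

theorem conjList_elim {l : List Form} {φ : Form} (h : φ ∈ l) :
    Prov ((conjList l).imp φ) := by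
  induction l with
  | nil => exact absurd h List.not_mem_nil
  | cons ψ l ih =>
    rcases List.mem_cons.1 h with h | h
    · subst h; exact H.prov_conj_left _ _
    · exact H.hs (ih h) (H.prov_conj_right _ _)

theorem conjList_intro {χ : Form} {l : List Form}
    (h : ∀ φ ∈ l, Prov (χ.imp φ)) : Prov (χ.imp (conjList l)) := by
  induction l with
  | nil => exact H.lift H.prov_top
  | cons ψ l ih =>
    have h1 : Prov (χ.imp ψ) := h ψ (by simp)
    have h2 : Prov (χ.imp (conjList l)) := ih fun φ hφ => h φ (by simp [hφ])
    exact H.impD (H.impD (H.lift (H.prov_conj_intro ψ (conjList l))) h1) h2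

/-- From a refutation of `¬φ ∧ A`, get `A → φ`. -/
theorem prov_neg_imp {φ A : Form} (h : Prov ((conj φ.neg A).imp Form.bot)) :
    Prov (A.imp φ) := by
  apply Drv.toProv H
  apply Drv.ded H
  have hnn : Drv Prov [A] (φ.neg.neg) := by
    apply Drv.ded H
    -- [φ.neg, A] ⊢ bot
    have h1 : Drv Prov [φ.neg, A] φ.neg := .hyp (by simp)
    have h2 : Drv Prov [φ.neg, A] A := .hyp (by simp)
    have hc : Drv Prov [φ.neg, A] (conj φ.neg A) :=
      .mp (.mp (.ax (H.prov_conj_intro φ.neg A)) h1) h2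
    exact .mp (.ax h) hc
  exact .mp (.ax (H.prov_dne φ)) hnn

theorem prov_ags_conj (φ ψ : Form) :
    Prov ((ags φ).imp ((ags ψ).imp (ags (conj φ ψ)))) := by
  have t1 : Prov (ags (φ.imp (ψ.imp (conj φ ψ)))) := H.necAgs (H.prov_conj_intro φ ψ)
  have t2 : Prov ((ags φ).imp (ags (ψ.imp (conj φ ψ)))) := H.mp (H.kAgs _ _) t1
  exact H.hs (H.kAgs ψ (conj φ ψ)) t2

/-! ### MCS lemmas -/

omit H in
theorem mcs_mem {w : Set Form} (hw : MCS Prov w) {φ : Form}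
    (h : Consistent Prov (insert φ w)) : φ ∈ w := by
  have := hw.2 (insert φ w) (Set.subset_insert _ _) h
  rw [← this]; exact Set.mem_insert _ _

theorem mcs_closed {w : Set Form} (hw : MCS Prov w) {φ : Form}
    (l : List Form) (hl : ∀ ψ ∈ l, ψ ∈ w)
    (h : Prov ((conjList l).imp φ)) : φ ∈ w := by
  classical
  apply mcs_mem hw
  rintro ⟨m, hm, hprov⟩
  set m' : List Form := m.filter (fun ψ => decide (ψ ∈ w)) ++ l with hm'def
  have hm'w : ∀ ψ ∈ m', ψ ∈ w := by
    intro ψ hψ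
    rcases List.mem_append.1 hψ with hψ | hψ
    · have := List.of_mem_filter hψ
      simpa using this
    · exact hl ψ hψ
  have himpφ : Prov ((conjList m').imp φ) :=
    H.hs h (H.conjList_intro fun χ hχ =>
      H.conjList_elim (List.mem_append_right _ hχ))
  have himp : Prov ((conjList m').imp (conjList m)) := by
    apply H.conjList_intro
    intro ψ hψ
    rcases hm ψ hψ with hψw | hψw
    · rw [hψw]; exact himpφ
    · apply H.conjList_elim
      exact List.mem_append_left _ (List.mem_filter.2 ⟨hψ, by simpa using hψw⟩)
  exact hw.1 ⟨m', hm'w, H.hs hprov himp⟩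

theorem mcs_of_prov {w : Set Form} (hw : MCS Prov w) {φ : Form}
    (h : Prov φ) : φ ∈ w :=
  H.mcs_closed hw [] (by simp) (H.lift h)

theorem mcs_mp {w : Set Form} (hw : MCS Prov w) {φ ψ : Form}
    (h1 : φ.imp ψ ∈ w) (h2 : φ ∈ w) : ψ ∈ w := by
  apply H.mcs_closed hw [φ.imp ψ, φ] (by simp [h1, h2])
  exact H.impD (H.conjList_elim (show φ.imp ψ ∈ [φ.imp ψ, φ] by simp))
    (H.conjList_elim (show φ ∈ [φ.imp ψ, φ] by simp))

theorem mcs_bot {w : Set Form} (hw : MCS Prov w) : Form.bot ∉ w := by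
  intro h
  exact hw.1 ⟨[Form.bot], by simp [h], H.conjList_elim (by simp)⟩

theorem mcs_neg_of_not_mem {w : Set Form} (hw : MCS Prov w) {φ : Form}
    (h : φ ∉ w) : φ.neg ∈ w := by
  classical
  by_contra hn
  apply h
  apply mcs_mem hw
  rintro ⟨m, hm, hprov⟩
  set m' : List Form := m.filter (fun ψ => decide (ψ ∈ w)) with hm'def
  have hm'w : ∀ ψ ∈ m', ψ ∈ w := by
    intro ψ hψ
    have := List.of_mem_filter hψ
    simpa using this
  have himp : Prov ((conjList (φ :: m')).imp (conjList m)) := by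
    apply H.conjList_intro
    intro ψ hψ
    rcases hm ψ hψ with hψw | hψw
    · rw [hψw]; exact H.conjList_elim (by simp)
    · apply H.conjList_elim
      exact List.mem_cons_of_mem _ (List.mem_filter.2 ⟨hψ, by simpa using hψw⟩)
  have hbot : Prov ((conj φ (conjList m')).imp Form.bot) := H.hs hprov himp
  -- derive (conjList m').imp φ.neg
  have hneg : Prov ((conjList m').imp φ.neg) := by
    apply Drv.toProv H
    apply Drv.ded H
    apply Drv.ded H
    -- [φ, conjList m'] ⊢ bot
    have h1 : Drv Prov [φ, conjList m'] φ := .hyp (by simp)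
    have h2 : Drv Prov [φ, conjList m'] (conjList m') := .hyp (by simp)
    have hc : Drv Prov [φ, conjList m'] (conj φ (conjList m')) :=
      .mp (.mp (.ax (H.prov_conj_intro φ (conjList m'))) h1) h2
    exact .mp (.ax hbot) hc
  exact hn (H.mcs_closed hw m' hm'w hneg)

theorem mcs_not_mem_of_neg {w : Set Form} (hw : MCS Prov w) {φ : Form}
    (h : φ.neg ∈ w) : φ ∉ w := fun hφ =>
  H.mcs_bot hw (H.mcs_mp hw h hφ)

theorem mcs_disj {w : Set Form} (hw : MCS Prov w) {φ ψ : Form}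
    (h : disj φ ψ ∈ w) : φ ∈ w ∨ ψ ∈ w := by
  by_cases hφ : φ ∈ w
  · exact Or.inl hφ
  · exact Or.inr (H.mcs_mp hw h (H.mcs_neg_of_not_mem hw hφ))

theorem mcs_disjList {w : Set Form} (hw : MCS Prov w) {l : List Form}
    (h : disjList l ∈ w) : ∃ φ ∈ l, φ ∈ w := by
  induction l with
  | nil => exact absurd h (H.mcs_bot hw)
  | cons ψ l ih =>
    rcases H.mcs_disj hw h with h | h
    · exact ⟨ψ, by simp, h⟩
    · obtain ⟨φ, hφl, hφw⟩ := ih h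
      exact ⟨φ, by simp [hφl], hφw⟩

theorem mcs_conjList_mem {w : Set Form} (hw : MCS Prov w) {l : List Form}
    {φ : Form} (h : conjList l ∈ w) (hφ : φ ∈ l) : φ ∈ w :=
  H.mcs_mp hw (H.mcs_of_prov hw (H.conjList_elim hφ)) h

theorem mcs_conjList_intro {w : Set Form} (hw : MCS Prov w) {l : List Form}
    (h : ∀ φ ∈ l, φ ∈ w) : conjList l ∈ w :=
  H.mcs_closed hw l h (H.prov_id _)

theorem mcs_conj_intro {w : Set Form} (hw : MCS Prov w) {φ ψ : Form}
    (h1 : φ ∈ w) (h2 : ψ ∈ w) : conj φ ψ ∈ w :=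
  H.mcs_mp hw (H.mcs_mp hw (H.mcs_of_prov hw (H.prov_conj_intro φ ψ)) h1) h2

theorem mcs_ags_conjList {w : Set Form} (hw : MCS Prov w) {l : List Form}
    (h : ∀ φ ∈ l, ags φ ∈ w) : ags (conjList l) ∈ w := by
  induction l with
  | nil => exact H.mcs_of_prov hw (H.necAgs H.prov_top)
  | cons ψ l ih =>
    have h1 : ags ψ ∈ w := h ψ (by simp)
    have h2 : ags (conjList l) ∈ w := ih fun φ hφ => h φ (by simp [hφ])
    exact H.mcs_mp hw
      (H.mcs_mp hw (H.mcs_of_prov hw (H.prov_ags_conj ψ (conjList l))) h1) h2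

/-- Existence lemma direction: a formula true at an accessible MCS gives a
diamond at the base MCS. -/
theorem mcs_dia {w v : Set Form} (hw : MCS Prov w) (hv : MCS Prov v)
    (hacc : ∀ φ : Form, box φ ∈ w → φ ∈ v) {ψ : Form} (h : ψ ∈ v) :
    dia ψ ∈ w := by
  by_contra hd
  have hneg : (dia ψ).neg ∈ w := H.mcs_neg_of_not_mem hw hd
  -- (dia ψ).neg = (box ψ.neg).neg.neg
  have hbox : box ψ.neg ∈ w :=
    H.mcs_mp hw (H.mcs_of_prov hw (H.prov_dne (box ψ.neg))) hneg
  exact H.mcs_not_mem_of_neg hv (hacc _ hbox) h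

end Sys

/-- Choice-boundedness from the counting axiom. In the canonical
model of Λ_n (S5 for □ and [Ags], the schema □φ→[Ags]φ, the axiom (AgsPC_n)),
for every maximal consistent set w the partition of \bar w induced by the
canonical relation R_{Ags} has at most n cells: among any n+1 members of
\bar w, two are R_{Ags}-related. -/
theorem choice_bounded (n : ℕ) (Prov : Form → Prop)
    (consis : ¬ Prov Form.bot)
    (mp : ∀ {φ ψ : Form}, Prov (φ.imp ψ) → Prov φ → Prov ψ)
    (a1 : ∀ φ ψ : Form, Prov (φ.imp (ψ.imp φ)))
    (a2 : ∀ φ ψ χ : Form, Prov ((φ.imp (ψ.imp χ)).imp ((φ.imp ψ).imp (φ.imp χ))))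
    (a3 : ∀ φ ψ : Form, Prov (((φ.neg).imp (ψ.neg)).imp (ψ.imp φ)))
    (kBox : ∀ φ ψ : Form, Prov ((box (φ.imp ψ)).imp ((box φ).imp (box ψ))))
    (tBox : ∀ φ : Form, Prov ((box φ).imp φ))
    (fourBox : ∀ φ : Form, Prov ((box φ).imp (box (box φ))))
    (fiveBox : ∀ φ : Form, Prov ((dia φ).imp (box (dia φ))))
    (necBox : ∀ {φ : Form}, Prov φ → Prov (box φ))
    (kAgs : ∀ φ ψ : Form, Prov ((ags (φ.imp ψ)).imp ((ags φ).imp (ags ψ))))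
    (tAgs : ∀ φ : Form, Prov ((ags φ).imp φ))
    (fourAgs : ∀ φ : Form, Prov ((ags φ).imp (ags (ags φ))))
    (fiveAgs : ∀ φ : Form, Prov ((diaAgs φ).imp (ags (diaAgs φ))))
    (necAgs : ∀ {φ : Form}, Prov φ → Prov (ags φ))
    (set_ax : ∀ φ : Form, Prov ((box φ).imp (ags φ)))
    -- (AgsPC_n), closed under substitution
    (agspc : ∀ l : List Form, l.length = n →
      Prov ((conjList (anteList [] l)).imp (disjList l))) :
    ∀ (w : Set Form) (c : Fin (n + 1) → Set Form),
      MCS Prov w →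
      (∀ i, MCS Prov (c i)) →
      (∀ (i : Fin (n + 1)) (φ : Form), box φ ∈ w → φ ∈ c i) →
      ∃ i j : Fin (n + 1), i ≠ j ∧ (∀ φ : Form, ags φ ∈ c i → φ ∈ c j) := by
  classical
  have H : Sys Prov :=
    ⟨fun {φ ψ} => mp, a1, a2, a3, fiveBox, kAgs, fun {φ} => necAgs⟩
  intro w c hw hc hbox
  by_contra hcon
  push_neg at hcon
  -- hcon : ∀ i j, i ≠ j → ∃ φ, ags φ ∈ c i ∧ φ ∉ c j
  have hsep : ∀ i j : Fin (n + 1), i ≠ j → ∃ φ, ags φ ∈ c i ∧ φ ∉ c j := by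
    intro i j hij
    obtain ⟨φ, hφ⟩ := hcon i j hij
    exact ⟨φ, hφ.1, hφ.2⟩
  choose f hf1 hf2 using hsep
  -- the separating formula for cell i
  set α : Fin (n + 1) → Form := fun i =>
    conjList ((List.finRange (n + 1)).filterMap
      (fun j => if h : i ≠ j then some (f i j h) else none)) with hα
  have hA : ∀ i, ags (α i) ∈ c i := by
    intro i
    apply H.mcs_ags_conjList (hc i)
    intro φ hφ
    obtain ⟨j, _, hj⟩ := List.mem_filterMap.1 hφ
    split_ifs at hj with h
    obtain rfl : f i j h = φ := Option.some.inj hj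
    exact hf1 i j h
  have hB : ∀ i j : Fin (n + 1), j ≠ i → α i ∉ c j := by
    intro i j hji hmem
    have hij : i ≠ j := fun h => hji h.symm
    have hfl : f i j hij ∈ (List.finRange (n + 1)).filterMap
        (fun j => if h : i ≠ j then some (f i j h) else none) :=
      List.mem_filterMap.2 ⟨j, List.mem_finRange j, by simp [hij]⟩
    exact hf2 i j hij (H.mcs_conjList_mem (hc j) hmem hfl)
  -- the main list handed to the counting axiom
  set l : List Form := (List.finRange n).map (fun k => α k.succ) with hl
  have hlen : l.length = n := by simp [hl]
  -- key lemma: every member of the antecedent list lies in c 0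
  have key : ∀ (rs ps : List (Fin (n + 1))),
      (∀ i ∈ rs, ∀ j ∈ ps, i ≠ j) → rs.Nodup →
      ∀ φ ∈ anteList (ps.map α) (rs.map α), φ ∈ c 0 := by
    intro rs
    induction rs with
    | nil => intro ps _ _ φ hφ; simp [anteList] at hφ
    | cons i rs ih =>
      intro ps hdist hnd φ hφ
      rw [List.map_cons, anteList] at hφ
      rcases List.mem_cons.1 hφ with hφ | hφ
      · subst hφ
        -- head conjunct: show the inner formula holds at c i, then push to c 0
        set ψ : Form := conj (conjList ((ps.map α).map Form.neg)) (ags (α i))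
          with hψ
        have hψi : ψ ∈ c i := by
          apply H.mcs_conj_intro (hc i)
          · apply H.mcs_conjList_intro (hc i)
            intro χ hχ
            obtain ⟨β, hβ, rfl⟩ := List.mem_map.1 hχ
            obtain ⟨j, hj, rfl⟩ := List.mem_map.1 hβ
            have hij : i ≠ j := hdist i (by simp) j hj
            exact H.mcs_neg_of_not_mem (hc i) (hB j i hij)
          · exact hA i
        have hdia : dia ψ ∈ w := H.mcs_dia hw (hc i) (hbox i) hψi
        have hboxdia : box (dia ψ) ∈ w :=
          H.mcs_mp hw (H.mcs_of_prov hw (fiveBox ψ)) hdia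
        exact hbox 0 _ hboxdia
      · have : ps.map α ++ [α i] = (ps ++ [i]).map α := by simp
        rw [this] at hφ
        apply ih (ps ++ [i]) _ (List.nodup_cons.1 hnd).2 φ hφ
        intro i' hi' j hj
        rcases List.mem_append.1 hj with hj | hj
        · exact hdist i' (by simp [hi']) j hj
        · simp only [List.mem_singleton] at hj
          subst hj
          intro h
          exact (List.nodup_cons.1 hnd).1 (h ▸ hi')
  -- instantiate with all successor indices
  have hrs : l = ((List.finRange n).map Fin.succ).map α := by
    simp [hl, List.map_map, Function.comp]
  have hante : ∀ φ ∈ anteList [] l, φ ∈ c 0 := by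
    have : ([] : List Form) = ([] : List (Fin (n + 1))).map α := by simp
    rw [hrs, this]
    apply key
    · intro i _ j hj; simp at hj
    · exact List.Nodup.map (Fin.succ_injective n) (List.nodup_finRange n)
  have hconj : conjList (anteList [] l) ∈ c 0 :=
    H.mcs_conjList_intro (hc 0) hante
  have hdisj : disjList l ∈ c 0 :=
    H.mcs_mp (hc 0) (H.mcs_of_prov (hc 0) (agspc l hlen)) hconj
  obtain ⟨φ, hφl, hφ0⟩ := H.mcs_disjList (hc 0) hdisj
  obtain ⟨k, _, rfl⟩ := List.mem_map.1 hφl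
  exact hB k.succ 0 (Fin.succ_ne_zero k).symm hφ0

end Stmt16
end

section
/- Uniformity transfer in the canonical model: if Λ contains S5 axioms for □ and K_α and the axiom (Unif-H): ◇K_αp → K_α◇p, then in the canonical model, whenever there exist maximal consistent sets v ∈ \bar{w_1} and u ∈ \bar{w_2} with v ≈_α u, then for every v' ∈ \bar{w_1} there exists u' ∈ \bar{w_2} with v' ≈_α u', where ≈_α is the canonical relation of K_α and \bar{w} the R_□-class of w. -/
namespace Stmt18

/-- Formulas with □ and K_α. -/
inductive Form : Type
  | var : Nat → Form
  | bot : Form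
  | imp : Form → Form → Form
  | box : Form → Form
  | know : Form → Form

namespace Form
def neg (φ : Form) : Form := imp φ bot
def conj (φ ψ : Form) : Form := neg (imp φ (neg ψ))
def top : Form := neg bot
def dia (φ : Form) : Form := neg (box (neg φ))
def diaK (φ : Form) : Form := neg (know (neg φ))
end Form

def conjList : List Form → Form
  | [] => Form.top
  | φ :: l => Form.conj φ (conjList l)

def Consistent (Prov : Form → Prop) (Γ : Set Form) : Prop :=
  ¬ ∃ l : List Form, (∀ φ ∈ l, φ ∈ Γ) ∧ Prov ((conjList l).imp Form.bot)

def MCS (Prov : Form → Prop) (w : Set Form) : Prop :=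
  Consistent Prov w ∧ ∀ Γ, w ⊆ Γ → Consistent Prov Γ → Γ = w

open Form

/-- Canonical relation of □. -/
def Rbox (w v : Set Form) : Prop := ∀ φ : Form, Form.box φ ∈ w → φ ∈ v

/-- Canonical relation of K_α. -/
def Rknow (w v : Set Form) : Prop := ∀ φ : Form, Form.know φ ∈ w → φ ∈ v

deriving instance DecidableEq for Form

section Aux

variable {Prov : Form → Prop}
variable (mp : ∀ {φ ψ : Form}, Prov (φ.imp ψ) → Prov φ → Prov ψ)
variable (a1 : ∀ φ ψ : Form, Prov (φ.imp (ψ.imp φ)))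
variable (a2 : ∀ φ ψ χ : Form, Prov ((φ.imp (ψ.imp χ)).imp ((φ.imp ψ).imp (φ.imp χ))))
variable (a3 : ∀ φ ψ : Form, Prov (((φ.neg).imp (ψ.neg)).imp (ψ.imp φ)))

include mp a1 a2

lemma PI (φ : Form) : Prov (φ.imp φ) :=
  mp (mp (a2 φ (φ.imp φ) φ) (a1 φ (φ.imp φ))) (a1 φ φ)

lemma Pcomp {φ ψ χ : Form} (h1 : Prov (φ.imp ψ)) (h2 : Prov (ψ.imp χ)) :
    Prov (φ.imp χ) :=
  mp (mp (a2 φ ψ χ) (mp (a1 (ψ.imp χ) φ) h2)) h1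

lemma Pflip {φ ψ χ : Form} (h : Prov (φ.imp (ψ.imp χ))) :
    Prov (ψ.imp (φ.imp χ)) :=
  Pcomp mp a1 a2 (a1 ψ φ) (mp (a2 φ ψ χ) h)

lemma Ppre {φ ψ : Form} (h : Prov (φ.imp ψ)) (χ : Form) :
    Prov ((ψ.imp χ).imp (φ.imp χ)) :=
  Pflip mp a1 a2 (Pcomp mp a1 a2 h (Pflip mp a1 a2 (PI mp a1 a2 (ψ.imp χ))))

lemma PswapT (φ ψ χ : Form) :
    Prov ((φ.imp (ψ.imp χ)).imp (ψ.imp (φ.imp χ))) :=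
  Pcomp mp a1 a2 (a2 φ ψ χ) (Ppre mp a1 a2 (a1 ψ φ) (φ.imp χ))

lemma Punder {ψ χ : Form} (φ : Form) (h : Prov (ψ.imp χ)) :
    Prov ((φ.imp ψ).imp (φ.imp χ)) :=
  mp (a2 φ ψ χ) (mp (a1 (ψ.imp χ) φ) h)

lemma Pmpd {φ ψ χ : Form} (h1 : Prov (φ.imp (ψ.imp χ))) (h2 : Prov (φ.imp ψ)) :
    Prov (φ.imp χ) :=
  mp (mp (a2 φ ψ χ) h1) h2

include a3

lemma Pefq (φ : Form) : Prov (Form.bot.imp φ) :=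
  mp (a3 φ Form.bot) (mp (a1 (Form.bot.imp Form.bot) φ.neg) (PI mp a1 a2 Form.bot))

lemma Pdne (φ : Form) : Prov (φ.neg.neg.imp φ) :=
  mp (a3 φ φ.neg.neg) (Pflip mp a1 a2 (PI mp a1 a2 φ.neg.neg))

lemma Pdni (φ : Form) : Prov (φ.imp φ.neg.neg) :=
  mp (a3 φ.neg.neg φ) (Pdne mp a1 a2 a3 φ.neg)

lemma Pcontra {φ ψ : Form} (h : Prov (φ.imp ψ)) : Prov (ψ.neg.imp φ.neg) :=
  mp (a3 φ.neg ψ.neg)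
    (Pcomp mp a1 a2 (Pcomp mp a1 a2 (Pdne mp a1 a2 a3 φ) h) (Pdni mp a1 a2 a3 ψ))

lemma PpairT (φ ψ : Form) : Prov (φ.imp (ψ.imp (conj φ ψ))) :=
  Pcomp mp a1 a2 (Pflip mp a1 a2 (PI mp a1 a2 (φ.imp ψ.neg)))
    (PswapT mp a1 a2 (φ.imp ψ.neg) ψ Form.bot)

lemma Pproj1 (φ ψ : Form) : Prov ((conj φ ψ).imp φ) :=
  mp (a3 φ (φ.imp ψ.neg).neg)
    (Pcomp mp a1 a2
      (Pcomp mp a1 a2 (PI mp a1 a2 φ.neg) (Punder mp a1 a2 φ (Pefq mp a1 a2 a3 ψ.neg)))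
      (Pdni mp a1 a2 a3 (φ.imp ψ.neg)))

lemma Pproj2 (φ ψ : Form) : Prov ((conj φ ψ).imp ψ) :=
  mp (a3 ψ (φ.imp ψ.neg).neg)
    (Pcomp mp a1 a2 (a1 ψ.neg φ) (Pdni mp a1 a2 a3 (φ.imp ψ.neg)))

lemma Ptop : Prov Form.top := PI mp a1 a2 Form.bot

lemma PtopI (φ : Form) : Prov (φ.imp Form.top) :=
  mp (a1 Form.top φ) (Ptop mp a1 a2 a3)

lemma Pelem : ∀ (l : List Form) (χ : Form), χ ∈ l → Prov ((conjList l).imp χ)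
  | φ :: l, χ, h => by
    rcases List.mem_cons.1 h with h | h
    · subst h; exact Pproj1 mp a1 a2 a3 χ (conjList l)
    · exact Pcomp mp a1 a2 (Pproj2 mp a1 a2 a3 φ (conjList l)) (Pelem l χ h)

lemma Pcollect {A : Form} :
    ∀ (l : List Form), (∀ χ ∈ l, Prov (A.imp χ)) → Prov (A.imp (conjList l))
  | [], _ => PtopI mp a1 a2 a3 A
  | φ :: l, h => by
    have h1 : Prov (A.imp φ) := h φ (List.mem_cons_self)
    have h2 : Prov (A.imp (conjList l)) :=
      Pcollect l (fun χ hχ => h χ (List.mem_cons_of_mem φ hχ))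
    exact Pmpd mp a1 a2 (Pcomp mp a1 a2 h1 (PpairT mp a1 a2 a3 φ (conjList l))) h2

lemma Psubsume {l l' : List Form} (hsub : ∀ χ ∈ l, χ ∈ l') :
    Prov ((conjList l').imp (conjList l)) :=
  Pcollect mp a1 a2 a3 l (fun χ h => Pelem mp a1 a2 a3 l' χ (hsub χ h))

/-- Deduction closure of an MCS. -/
lemma mcs_closed {w : Set Form} (hw : MCS Prov w) {φ : Form}
    (l : List Form) (hl : ∀ χ ∈ l, χ ∈ w) (hd : Prov ((conjList l).imp φ)) :
    φ ∈ w := by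
  have hcons : Consistent Prov (insert φ w) := by
    rintro ⟨m, hm, hbot⟩
    apply hw.1
    refine ⟨l ++ m.filter (fun χ => χ ≠ φ), ?_, ?_⟩
    · intro χ hχ
      rcases List.mem_append.1 hχ with h | h
      · exact hl χ h
      · have := List.mem_filter.1 h
        have hne : χ ≠ φ := by simpa using this.2
        rcases hm χ this.1 with h' | h'
        · exact absurd h' hne
        · exact h'
    · refine Pcomp mp a1 a2 ?_ hbot
      apply Pcollect mp a1 a2 a3
      intro χ hχ
      by_cases hc : χ = φ
      · subst hc
        refine Pcomp mp a1 a2 ?_ hd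
        apply Psubsume mp a1 a2 a3
        intro ρ hρ; exact List.mem_append_left _ hρ
      · apply Pelem mp a1 a2 a3
        exact List.mem_append_right _ (List.mem_filter.2 ⟨hχ, by simpa using hc⟩)
  have := hw.2 _ (Set.subset_insert φ w) hcons
  rw [← this]; exact Set.mem_insert φ w

lemma mcs_prov_mem {w : Set Form} (hw : MCS Prov w) {φ : Form} (h : Prov φ) :
    φ ∈ w :=
  mcs_closed mp a1 a2 a3 hw [] (by simp) (mp (a1 φ Form.top) h)

lemma mcs_imp_mem {w : Set Form} (hw : MCS Prov w) {φ ψ : Form}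
    (hφ : φ ∈ w) (h : Prov (φ.imp ψ)) : ψ ∈ w :=
  mcs_closed mp a1 a2 a3 hw [φ] (by simpa using hφ)
    (Pcomp mp a1 a2 (Pproj1 mp a1 a2 a3 φ Form.top) h)

lemma mcs_not_both {w : Set Form} (hw : MCS Prov w) {φ : Form}
    (h1 : φ ∈ w) (h2 : φ.neg ∈ w) : False := by
  apply hw.1
  refine ⟨[φ, φ.neg], by simp [h1, h2], ?_⟩
  exact Pmpd mp a1 a2 (Pelem mp a1 a2 a3 [φ, φ.neg] φ.neg (by simp))
    (Pelem mp a1 a2 a3 [φ, φ.neg] φ (by simp))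

lemma mcs_neg_mem {w : Set Form} (hw : MCS Prov w) {φ : Form} (h : φ ∉ w) :
    φ.neg ∈ w := by
  have hcons : Consistent Prov (insert φ.neg w) := by
    rintro ⟨m, hm, hbot⟩
    have hl' : ∀ χ ∈ m.filter (fun χ => χ ≠ φ.neg), χ ∈ w := by
      intro χ hχ
      have := List.mem_filter.1 hχ
      have hne : χ ≠ φ.neg := by simpa using this.2
      rcases hm χ this.1 with h' | h'
      · exact absurd h' hne
      · exact h'
    set l' := m.filter (fun χ => χ ≠ φ.neg) with hl'def
    have hsub : Prov ((conjList (φ.neg :: l')).imp (conjList m)) := by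
      apply Pcollect mp a1 a2 a3
      intro χ hχ
      by_cases hc : χ = φ.neg
      · subst hc; exact Pelem mp a1 a2 a3 _ _ (by simp)
      · exact Pelem mp a1 a2 a3 _ _
          (List.mem_cons_of_mem _ (List.mem_filter.2 ⟨hχ, by simpa using hc⟩))
    have hD : Prov ((conjList (φ.neg :: l')).imp Form.bot) :=
      Pcomp mp a1 a2 hsub hbot
    -- conjList (φ.neg :: l') = conj φ.neg (conjList l')
    have h1 : Prov (φ.neg.imp ((conjList l').imp (conjList (φ.neg :: l')))) :=
      PpairT mp a1 a2 a3 φ.neg (conjList l')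
    have h2 : Prov ((conjList l').imp (φ.neg.imp Form.bot)) :=
      Pcomp mp a1 a2 (Pflip mp a1 a2 h1) (Punder mp a1 a2 φ.neg hD)
    have h3 : Prov ((conjList l').imp φ) :=
      Pcomp mp a1 a2 h2 (Pdne mp a1 a2 a3 φ)
    exact h (mcs_closed mp a1 a2 a3 hw l' hl' h3)
  have := hw.2 _ (Set.subset_insert φ.neg w) hcons
  rw [← this]; exact Set.mem_insert _ w

lemma mcs_conj_mem {w : Set Form} (hw : MCS Prov w)
    (l : List Form) (hl : ∀ χ ∈ l, χ ∈ w) : conjList l ∈ w :=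
  mcs_closed mp a1 a2 a3 hw l hl (PI mp a1 a2 (conjList l))

/-- Generic distribution of a normal modality over conjList. -/
lemma Pmdist {m : Form → Form}
    (km : ∀ φ ψ : Form, Prov ((m (φ.imp ψ)).imp ((m φ).imp (m ψ))))
    (necm : ∀ {φ : Form}, Prov φ → Prov (m φ)) :
    ∀ (l : List Form), Prov ((conjList (l.map m)).imp (m (conjList l)))
  | [] => mp (a1 (m Form.top) Form.top) (necm (Ptop mp a1 a2 a3))
  | φ :: l => by
    have ih := Pmdist km necm l
    set r := conjList l with hr
    have h1 : Prov ((conjList ((φ :: l).map m)).imp (m φ)) :=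
      Pproj1 mp a1 a2 a3 (m φ) (conjList (l.map m))
    have h2 : Prov ((conjList ((φ :: l).map m)).imp (m r)) :=
      Pcomp mp a1 a2 (Pproj2 mp a1 a2 a3 (m φ) (conjList (l.map m))) ih
    have hpair : Prov ((m φ).imp ((m r).imp (m (conj φ r)))) :=
      Pcomp mp a1 a2 (mp (km φ (r.imp (conj φ r))) (necm (PpairT mp a1 a2 a3 φ r)))
        (km r (conj φ r))
    exact Pmpd mp a1 a2 (Pcomp mp a1 a2 h1 hpair) h2

lemma Pmdist' {m : Form → Form}
    (km : ∀ φ ψ : Form, Prov ((m (φ.imp ψ)).imp ((m φ).imp (m ψ))))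
    (necm : ∀ {φ : Form}, Prov φ → Prov (m φ))
    {l : List Form} {φ : Form} (h : Prov ((conjList l).imp φ)) :
    Prov ((conjList (l.map m)).imp (m φ)) :=
  Pcomp mp a1 a2 (Pmdist mp a1 a2 a3 km necm l)
    (mp (km (conjList l) φ) (necm h))

omit mp a1 a2 a3

/-- Lindenbaum's lemma. -/
lemma lindenbaum {Γ : Set Form} (h : Consistent Prov Γ) :
    ∃ w, Γ ⊆ w ∧ MCS Prov w := by
  obtain ⟨m, hm, hmax⟩ := zorn_subset_nonempty {Δ : Set Form | Consistent Prov Δ}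
    (fun c hc hchain ⟨t, ht⟩ => by
      refine ⟨⋃₀ c, ?_, fun s hs => Set.subset_sUnion_of_mem hs⟩
      rintro ⟨l, hl, hbot⟩
      have : ∃ s ∈ c, ∀ χ ∈ l, χ ∈ s := by
        clear hbot
        induction l with
        | nil => exact ⟨t, ht, by simp⟩
        | cons φ l ih =>
          obtain ⟨s, hs, hls⟩ := ih (fun χ hχ => hl χ (List.mem_cons_of_mem φ hχ))
          obtain ⟨s', hs', hφs'⟩ := Set.mem_sUnion.1 (hl φ (List.mem_cons_self))
          rcases hchain.total hs hs' with hss | hss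
          · exact ⟨s', hs', fun χ hχ => by
              rcases List.mem_cons.1 hχ with h' | h'
              · subst h'; exact hφs'
              · exact hss (hls χ h')⟩
          · exact ⟨s, hs, fun χ hχ => by
              rcases List.mem_cons.1 hχ with h' | h'
              · subst h'; exact hss hφs'
              · exact hls χ h'⟩
      obtain ⟨s, hs, hls⟩ := this
      exact hc hs ⟨l, hls, hbot⟩) Γ h
  exact ⟨m, hm, hmax.prop, fun Γ' hsub hcons =>
    Set.Subset.antisymm (hmax.le_of_ge hcons hsub) hsub⟩

end Aux

/-- Uniformity transfer in the canonical model. If Λ contains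
S5 for □ and K_α and the axiom (Unif-H): ◇K_αp → K_α◇p, then whenever there
are maximal consistent sets v ∈ \bar{w₁} and u ∈ \bar{w₂} with v ≈_α u,
then for every maximal consistent v' ∈ \bar{w₁} there exists a maximal
consistent u' ∈ \bar{w₂} with v' ≈_α u'. -/
theorem canonical_uniformity_transfer (Prov : Form → Prop)
    (consis : ¬ Prov Form.bot)
    (mp : ∀ {φ ψ : Form}, Prov (φ.imp ψ) → Prov φ → Prov ψ)
    (a1 : ∀ φ ψ : Form, Prov (φ.imp (ψ.imp φ)))
    (a2 : ∀ φ ψ χ : Form, Prov ((φ.imp (ψ.imp χ)).imp ((φ.imp ψ).imp (φ.imp χ))))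
    (a3 : ∀ φ ψ : Form, Prov (((φ.neg).imp (ψ.neg)).imp (ψ.imp φ)))
    (kBox : ∀ φ ψ : Form, Prov ((box (φ.imp ψ)).imp ((box φ).imp (box ψ))))
    (tBox : ∀ φ : Form, Prov ((box φ).imp φ))
    (fourBox : ∀ φ : Form, Prov ((box φ).imp (box (box φ))))
    (fiveBox : ∀ φ : Form, Prov ((dia φ).imp (box (dia φ))))
    (necBox : ∀ {φ : Form}, Prov φ → Prov (box φ))
    (kK : ∀ φ ψ : Form, Prov ((know (φ.imp ψ)).imp ((know φ).imp (know ψ))))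
    (tK : ∀ φ : Form, Prov ((know φ).imp φ))
    (fourK : ∀ φ : Form, Prov ((know φ).imp (know (know φ))))
    (fiveK : ∀ φ : Form, Prov ((diaK φ).imp (know (diaK φ))))
    (necK : ∀ {φ : Form}, Prov φ → Prov (know φ))
    (unifH : ∀ φ : Form, Prov ((dia (know φ)).imp (know (dia φ)))) :
    ∀ w₁ w₂ v u : Set Form,
      MCS Prov w₁ → MCS Prov w₂ → MCS Prov v → MCS Prov u →
      Rbox w₁ v → Rbox w₂ u → Rknow v u →
      ∀ v' : Set Form, MCS Prov v' → Rbox w₁ v' →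
        ∃ u' : Set Form, MCS Prov u' ∧ Rbox w₂ u' ∧ Rknow v' u' := by
  intro w₁ w₂ v u hw₁ hw₂ hv hu hR1 hR2 hK v' hv' hR1'
  classical
  -- canonical R□ is symmetric (via the B axiom, derivable from T and 5)
  have hsymm : ∀ a b : Set Form, MCS Prov a → MCS Prov b → Rbox a b → Rbox b a := by
    intro a b ha hb hab φ hφ
    by_contra hno
    have hnφ : φ.neg ∈ a := mcs_neg_mem mp a1 a2 a3 ha hno
    have hB : Prov (φ.neg.imp (box (dia φ.neg))) := by
      have h1 : Prov (φ.neg.imp (dia φ.neg)) :=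
        Pcomp mp a1 a2 (Pdni mp a1 a2 a3 φ.neg)
          (Pcontra mp a1 a2 a3 (tBox φ.neg.neg))
      exact Pcomp mp a1 a2 h1 (fiveBox φ.neg)
    have h2 : box (dia φ.neg) ∈ a := mcs_imp_mem mp a1 a2 a3 ha hnφ hB
    have h3 : dia φ.neg ∈ b := hab _ h2
    have h4 : box φ.neg.neg ∈ b :=
      mcs_imp_mem mp a1 a2 a3 hb hφ
        (mp (kBox φ φ.neg.neg) (necBox (Pdni mp a1 a2 a3 φ)))
    exact mcs_not_both mp a1 a2 a3 hb h4 h3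
  -- canonical R□ is transitive (via 4)
  have htrans : ∀ a b c : Set Form, MCS Prov a → Rbox a b → Rbox b c → Rbox a c := by
    intro a b c ha hab hbc φ hφ
    exact hbc _ (hab _ (mcs_imp_mem mp a1 a2 a3 ha hφ (fourBox φ)))
  have hvv' : Rbox v v' := htrans v w₁ v' hv (hsymm w₁ v hw₁ hv hR1) hR1'
  -- existence of diamonds
  have hdia_mem : ∀ φ : Form, φ ∈ v' → dia φ ∈ v := by
    intro φ hφ
    by_contra hno
    have h1 : (dia φ).neg ∈ v := mcs_neg_mem mp a1 a2 a3 hv hno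
    have h2 : box φ.neg ∈ v :=
      mcs_imp_mem mp a1 a2 a3 hv h1 (Pdne mp a1 a2 a3 (box φ.neg))
    exact mcs_not_both mp a1 a2 a3 hv' hφ (hvv' _ h2)
  -- the set to be extended
  have hΓ : Consistent Prov ({ψ | know ψ ∈ v'} ∪ {ψ | box ψ ∈ w₂}) := by
    rintro ⟨l, hl, hbot⟩
    have hpart : ∀ m : List Form,
        (∀ φ ∈ m, φ ∈ ({ψ | know ψ ∈ v'} ∪ {ψ | box ψ ∈ w₂} : Set Form)) →
        ∃ lK lB : List Form, (∀ ψ ∈ lK, know ψ ∈ v') ∧ (∀ ψ ∈ lB, box ψ ∈ w₂) ∧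
          (∀ χ ∈ m, χ ∈ lK ∨ χ ∈ lB) := by
      intro m
      induction m with
      | nil => exact fun _ => ⟨[], [], by simp, by simp, by simp⟩
      | cons φ m ih =>
        intro h
        obtain ⟨lK, lB, h1, h2, h3⟩ := ih (fun χ hχ => h χ (List.mem_cons_of_mem _ hχ))
        rcases h φ (List.mem_cons_self) with hφ | hφ
        · refine ⟨φ :: lK, lB, ?_, h2, ?_⟩
          · intro ψ hψ
            rcases List.mem_cons.1 hψ with rfl | hψ
            · exact hφ
            · exact h1 ψ hψ
          · intro χ hχ
            rcases List.mem_cons.1 hχ with rfl | hχ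
            · exact Or.inl (List.mem_cons_self)
            · rcases h3 χ hχ with h' | h'
              · exact Or.inl (List.mem_cons_of_mem _ h')
              · exact Or.inr h'
        · refine ⟨lK, φ :: lB, h1, ?_, ?_⟩
          · intro ψ hψ
            rcases List.mem_cons.1 hψ with rfl | hψ
            · exact hφ
            · exact h2 ψ hψ
          · intro χ hχ
            rcases List.mem_cons.1 hχ with rfl | hχ
            · exact Or.inr (List.mem_cons_self)
            · rcases h3 χ hχ with h' | h'
              · exact Or.inl h'
              · exact Or.inr (List.mem_cons_of_mem _ h')
    obtain ⟨lK, lB, hK1, hB1, hcov⟩ := hpart l hl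
    set Ψ := conjList lK with hΨdef
    set B := conjList lB with hBdef
    have hKB : Prov ((conj Ψ B).imp Form.bot) := by
      refine Pcomp mp a1 a2 ?_ hbot
      apply Pcollect mp a1 a2 a3
      intro χ hχ
      rcases hcov χ hχ with h | h
      · exact Pcomp mp a1 a2 (Pproj1 mp a1 a2 a3 Ψ B) (Pelem mp a1 a2 a3 lK χ h)
      · exact Pcomp mp a1 a2 (Pproj2 mp a1 a2 a3 Ψ B) (Pelem mp a1 a2 a3 lB χ h)
    have hBnΨ : Prov (B.imp Ψ.neg) :=
      Pflip mp a1 a2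
        (Pcomp mp a1 a2 (PpairT mp a1 a2 a3 Ψ B) (Punder mp a1 a2 B hKB))
    have hknowΨ : know Ψ ∈ v' := by
      have hmem : conjList (lK.map know) ∈ v' := by
        apply mcs_conj_mem mp a1 a2 a3 hv'
        intro χ hχ
        obtain ⟨ψ, hψ, rfl⟩ := List.mem_map.1 hχ
        exact hK1 ψ hψ
      exact mcs_imp_mem mp a1 a2 a3 hv' hmem
        (Pmdist' mp a1 a2 a3 kK necK (PI mp a1 a2 Ψ))
    have hdia : dia (know Ψ) ∈ v := hdia_mem _ hknowΨ
    have hKdia : know (dia Ψ) ∈ v := mcs_imp_mem mp a1 a2 a3 hv hdia (unifH Ψ)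
    have hdiau : dia Ψ ∈ u := hK _ hKdia
    have hboxB : box B ∈ u := by
      have hmem : conjList (lB.map box) ∈ u := by
        apply mcs_conj_mem mp a1 a2 a3 hu
        intro χ hχ
        obtain ⟨ψ, hψ, rfl⟩ := List.mem_map.1 hχ
        exact hR2 _ (mcs_imp_mem mp a1 a2 a3 hw₂ (hB1 ψ hψ) (fourBox ψ))
      exact mcs_imp_mem mp a1 a2 a3 hu hmem
        (Pmdist' mp a1 a2 a3 kBox necBox (PI mp a1 a2 B))
    have hboxnΨ : box Ψ.neg ∈ u :=
      mcs_imp_mem mp a1 a2 a3 hu hboxB (mp (kBox B Ψ.neg) (necBox hBnΨ))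
    exact mcs_not_both mp a1 a2 a3 hu hboxnΨ hdiau
  obtain ⟨u', hsub, hu'⟩ := lindenbaum hΓ
  exact ⟨u', hu', fun φ h => hsub (Set.mem_union_right _ h),
    fun φ h => hsub (Set.mem_union_left _ h)⟩

end Stmt18
end
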